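/- arXiv:1901.08390 — 7 statements merged into one kernel-verified Lean document; each statement's English description precedes it below -/
import Mathlib

section
/- Let N ≥ 2 be an integer and let x₀ lie in the interior of C_N^A. Then there exists a unique continuously differentiable function φ : [0,∞) → ℝ^N with φ(0) = x₀ such that φ(t) lies in the interior of C_N^A for every t ≥ 0 and φ solves the ODE of type A_{N−1}, i.e. φ_i'(t) = ∑_{j≠i} 1/(φ_i(t) − φ_j(t)) for all i = 1,…,N and all t ≥ 0. -/
open scoped BigOperators

noncomputable section

open scoped NNReal
open Set Metric

namespace DysonAux

variable {N : ℕ}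


/-- The vector field of the `A_{N-1}` ODE. -/
def vf (x : Fin N → ℝ) : Fin N → ℝ := fun i => ∑ j ∈ Finset.univ.erase i, (x i - x j)⁻¹

/-- Points whose (ordered) gaps are all at least `ε`. -/
def Sgap (ε : ℝ) : Set (Fin N → ℝ) := {x | ∀ i j : Fin N, i < j → ε ≤ x i - x j}

lemma strictAnti_of_mem_Sgap {ε : ℝ} (hε : 0 < ε) {x : Fin N → ℝ} (hx : x ∈ Sgap ε) :
    StrictAnti x := fun i j hij => by have := hx i j hij; linarith

lemma abs_gap {ε : ℝ} {x : Fin N → ℝ} (hx : x ∈ Sgap ε) {i j : Fin N} (hij : i ≠ j) :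
    ε ≤ |x i - x j| := by
  rcases hij.lt_or_gt with h | h
  · exact (hx i j h).trans (le_abs_self _)
  · rw [abs_sub_comm]; exact (hx j i h).trans (le_abs_self _)

lemma abs_inv_sub_inv_le {a b ε : ℝ} (hε : 0 < ε) (ha : ε ≤ |a|) (hb : ε ≤ |b|) :
    |a⁻¹ - b⁻¹| ≤ |a - b| / ε ^ 2 := by
  have ha0 : a ≠ 0 := by intro h; rw [h] at ha; simp at ha; linarith
  have hb0 : b ≠ 0 := by intro h; rw [h] at hb; simp at hb; linarith
  have key : a⁻¹ - b⁻¹ = (b - a) / (a * b) := by field_simp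
  rw [key, abs_div, abs_mul]
  have h1 : ε ^ 2 ≤ |a| * |b| := by nlinarith [abs_nonneg a, abs_nonneg b]
  have h2 : |b - a| = |a - b| := abs_sub_comm _ _
  rw [h2]
  exact div_le_div_of_nonneg_left (abs_nonneg _) (by positivity) h1

lemma vf_lipschitzOnWith {ε : ℝ} (hε : 0 < ε) :
    LipschitzOnWith (Real.toNNReal (2 * N / ε ^ 2)) (vf (N := N)) (Sgap ε) := by
  apply LipschitzOnWith.of_dist_le_mul
  intro x hx y hy
  have hcoe : ((Real.toNNReal (2 * N / ε ^ 2) : ℝ≥0) : ℝ) = 2 * N / ε ^ 2 :=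
    Real.coe_toNNReal _ (by positivity)
  rw [hcoe]
  rw [dist_pi_le_iff (by positivity)]
  intro i
  have step1 : dist (vf x i) (vf y i)
      ≤ ∑ j ∈ Finset.univ.erase i, |(x i - x j)⁻¹ - (y i - y j)⁻¹| := by
    rw [Real.dist_eq]
    unfold vf
    rw [← Finset.sum_sub_distrib]
    exact Finset.abs_sum_le_sum_abs _ _
  refine step1.trans ?_
  have hterm : ∀ j ∈ Finset.univ.erase i,
      |(x i - x j)⁻¹ - (y i - y j)⁻¹| ≤ 2 * dist x y / ε ^ 2 := by
    intro j hj
    have hij : i ≠ j := (Finset.mem_erase.1 hj).1.symm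
    have h1 : ε ≤ |x i - x j| := abs_gap hx hij
    have h2 : ε ≤ |y i - y j| := abs_gap hy hij
    refine (abs_inv_sub_inv_le hε h1 h2).trans ?_
    have hnum : |x i - x j - (y i - y j)| ≤ 2 * dist x y := by
      have hi : |x i - y i| ≤ dist x y := by rw [← Real.dist_eq]; exact dist_le_pi_dist x y i
      have hj' : |x j - y j| ≤ dist x y := by rw [← Real.dist_eq]; exact dist_le_pi_dist x y j
      calc |x i - x j - (y i - y j)| = |(x i - y i) - (x j - y j)| := by ring_nf
        _ ≤ |x i - y i| + |x j - y j| := abs_sub _ _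
        _ ≤ 2 * dist x y := by linarith
    exact div_le_div_of_nonneg_right hnum (by positivity)
  calc ∑ j ∈ Finset.univ.erase i, |(x i - x j)⁻¹ - (y i - y j)⁻¹|
      ≤ ∑ _j ∈ Finset.univ.erase i, 2 * dist x y / ε ^ 2 := Finset.sum_le_sum hterm
    _ = (Finset.univ.erase i).card * (2 * dist x y / ε ^ 2) := by
        rw [Finset.sum_const, nsmul_eq_mul]
    _ ≤ N * (2 * dist x y / ε ^ 2) := by
        have hcard : ((Finset.univ.erase i).card : ℝ) ≤ N := by
          have := Finset.card_erase_le (s := (Finset.univ : Finset (Fin N))) (a := i)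
          have h2 : (Finset.univ : Finset (Fin N)).card = N := Finset.card_univ.trans (Fintype.card_fin N)
          exact_mod_cast this.trans_eq h2
        have hpos : (0:ℝ) ≤ 2 * dist x y / ε ^ 2 := by positivity
        nlinarith
    _ = 2 * N / ε ^ 2 * dist x y := by ring

lemma norm_vf_le {ε : ℝ} (hε : 0 < ε) {x : Fin N → ℝ} (hx : x ∈ Sgap ε) :
    ‖vf x‖ ≤ N / ε := by
  rw [pi_norm_le_iff_of_nonneg (by positivity)]
  intro i
  rw [Real.norm_eq_abs]
  calc |vf x i| ≤ ∑ j ∈ Finset.univ.erase i, |(x i - x j)⁻¹| :=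
        Finset.abs_sum_le_sum_abs _ _
    _ ≤ ∑ _j ∈ Finset.univ.erase i, ε⁻¹ := by
        refine Finset.sum_le_sum fun j hj => ?_
        have hij : i ≠ j := (Finset.mem_erase.1 hj).1.symm
        rw [abs_inv]
        exact inv_anti₀ hε (abs_gap hx hij)
    _ = (Finset.univ.erase i).card * ε⁻¹ := by rw [Finset.sum_const, nsmul_eq_mul]
    _ ≤ N * ε⁻¹ := by
        have hcard : ((Finset.univ.erase i).card : ℝ) ≤ N := by
          have := Finset.card_erase_le (s := (Finset.univ : Finset (Fin N))) (a := i)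
          have h2 : (Finset.univ : Finset (Fin N)).card = N :=
            Finset.card_univ.trans (Fintype.card_fin N)
          exact_mod_cast this.trans_eq h2
        have : (0:ℝ) ≤ ε⁻¹ := by positivity
        nlinarith
    _ = N / ε := by rw [div_eq_mul_inv]

lemma closedBall_subset_Sgap {ε r : ℝ} {y : Fin N → ℝ} (hy : y ∈ Sgap ε) :
    closedBall y r ⊆ Sgap (ε - 2 * r) := by
  intro z hz
  intro i j hij
  have hd : dist z y ≤ r := mem_closedBall.1 hz
  have hi : |z i - y i| ≤ r := by
    rw [← Real.dist_eq]; exact (dist_le_pi_dist z y i).trans hd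
  have hj : |z j - y j| ≤ r := by
    rw [← Real.dist_eq]; exact (dist_le_pi_dist z y j).trans hd
  have := hy i j hij
  have h1 : -(r) ≤ z i - y i := neg_le_of_abs_le hi
  have h2 : z j - y j ≤ r := le_of_abs_le hj
  linarith

/-- pairs `(i,j)` with `i < j`. -/
def pairs (N : ℕ) : Finset (Fin N × Fin N) := Finset.univ.filter (fun p => p.1 < p.2)

lemma sum_pairs_add (g : Fin N → Fin N → ℝ) :
    ∑ p ∈ pairs N, (g p.1 p.2 + g p.2 p.1) = ∑ i, ∑ j ∈ Finset.univ.erase i, g i j := by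
  have rhs : ∀ i : Fin N, ∑ j ∈ Finset.univ.erase i, g i j
      = (∑ j, if j < i then g i j else 0) + ∑ j, if i < j then g i j else 0 := by
    intro i
    rw [← Finset.filter_ne' Finset.univ i, Finset.sum_filter, ← Finset.sum_add_distrib]
    refine Finset.sum_congr rfl fun j _ => ?_
    rcases lt_trichotomy i j with h | h | h
    · simp [h, h.ne', not_lt.2 h.le, h.ne]
    · simp [h]
    · simp [h, h.ne', not_lt.2 h.le, h.ne]
  have swap : ∑ i, ∑ j, (if j < i then g i j else 0) = ∑ i, ∑ j, (if i < j then g j i else 0) :=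
    Finset.sum_comm
  calc ∑ p ∈ pairs N, (g p.1 p.2 + g p.2 p.1)
      = ∑ p : Fin N × Fin N, if p.1 < p.2 then g p.1 p.2 + g p.2 p.1 else 0 := by
        rw [pairs, Finset.sum_filter]
    _ = ∑ i, ∑ j, (if i < j then g i j + g j i else 0) := by
        rw [Fintype.sum_prod_type]
    _ = ∑ i, ((∑ j, if j < i then g i j else 0) + ∑ j, if i < j then g i j else 0) := by
        rw [Finset.sum_add_distrib, swap, ← Finset.sum_add_distrib]
        refine Finset.sum_congr rfl fun i _ => ?_
        rw [← Finset.sum_add_distrib]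
        refine Finset.sum_congr rfl fun j _ => ?_
        by_cases h : i < j <;> simp [h, add_comm]
    _ = ∑ i, ∑ j ∈ Finset.univ.erase i, g i j := by
        refine Finset.sum_congr rfl fun i _ => (rhs i).symm

lemma sum_two_mul_vf {x : Fin N → ℝ} (hx : ∀ i j : Fin N, i ≠ j → x i ≠ x j) :
    ∑ i, 2 * x i * vf x i = 2 * (pairs N).card := by
  have key : ∑ p ∈ pairs N,
      (x p.1 * (x p.1 - x p.2)⁻¹ + x p.2 * (x p.2 - x p.1)⁻¹)
      = ∑ i, ∑ j ∈ Finset.univ.erase i, x i * (x i - x j)⁻¹ :=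
    sum_pairs_add (fun i j => x i * (x i - x j)⁻¹)
  have pair_one : ∀ p ∈ pairs N,
      x p.1 * (x p.1 - x p.2)⁻¹ + x p.2 * (x p.2 - x p.1)⁻¹ = 1 := by
    intro p hp
    have hne : x p.1 - x p.2 ≠ 0 := by
      have : p.1 < p.2 := (Finset.mem_filter.1 hp).2
      have := hx p.1 p.2 this.ne
      intro h; apply this; linarith
    have hsw : (x p.2 - x p.1)⁻¹ = -(x p.1 - x p.2)⁻¹ := by
      rw [← neg_sub (x p.1) (x p.2), inv_neg]
    have h1 : (x p.1 - x p.2) * (x p.1 - x p.2)⁻¹ = 1 := mul_inv_cancel₀ hne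
    rw [hsw]
    linear_combination h1
  have lhs : ∑ p ∈ pairs N,
      (x p.1 * (x p.1 - x p.2)⁻¹ + x p.2 * (x p.2 - x p.1)⁻¹) = (pairs N).card := by
    rw [Finset.sum_congr rfl pair_one, Finset.sum_const, nsmul_eq_mul, mul_one]
  calc ∑ i, 2 * x i * vf x i = 2 * ∑ i, ∑ j ∈ Finset.univ.erase i, x i * (x i - x j)⁻¹ := by
        rw [Finset.mul_sum]
        refine Finset.sum_congr rfl fun i _ => ?_
        rw [vf, Finset.mul_sum, Finset.mul_sum]
        refine Finset.sum_congr rfl fun j _ => by ring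
    _ = 2 * (pairs N).card := by rw [← key, lhs]

lemma sum_pairs_vf_sub {x : Fin N → ℝ} (hx : ∀ i j : Fin N, i ≠ j → x i ≠ x j) :
    ∑ p ∈ pairs N, (vf x p.1 - vf x p.2) / (x p.1 - x p.2) = ∑ i, (vf x i) ^ 2 := by
  have key : ∑ p ∈ pairs N,
      (vf x p.1 * (x p.1 - x p.2)⁻¹ + vf x p.2 * (x p.2 - x p.1)⁻¹)
      = ∑ i, ∑ j ∈ Finset.univ.erase i, vf x i * (x i - x j)⁻¹ :=
    sum_pairs_add (fun i j => vf x i * (x i - x j)⁻¹)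
  have pair_eq : ∀ p ∈ pairs N,
      (vf x p.1 - vf x p.2) / (x p.1 - x p.2)
        = vf x p.1 * (x p.1 - x p.2)⁻¹ + vf x p.2 * (x p.2 - x p.1)⁻¹ := by
    intro p hp
    have hne : x p.1 - x p.2 ≠ 0 := by
      have : p.1 < p.2 := (Finset.mem_filter.1 hp).2
      have := hx p.1 p.2 this.ne
      intro h; apply this; linarith
    have hsw : (x p.2 - x p.1)⁻¹ = -(x p.1 - x p.2)⁻¹ := by
      rw [← neg_sub (x p.1) (x p.2), inv_neg]
    rw [hsw, div_eq_mul_inv]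
    ring
  rw [Finset.sum_congr rfl pair_eq, key]
  refine Finset.sum_congr rfl fun i _ => ?_
  rw [← Finset.mul_sum, ← vf, sq]

/-- Solution of the ODE on `[0, T]`. -/
def IsSol (x₀ : Fin N → ℝ) (T : ℝ) (f : ℝ → Fin N → ℝ) : Prop :=
  f 0 = x₀ ∧ ∀ t ∈ Icc (0:ℝ) T, StrictAnti (f t) ∧ HasDerivWithinAt f (vf (f t)) (Icc 0 T) t

lemma IsSol.restrict {x₀ : Fin N → ℝ} {T T' : ℝ} {f : ℝ → Fin N → ℝ}
    (h : IsSol x₀ T f) (h0 : 0 ≤ T') (hT : T' ≤ T) : IsSol x₀ T' f := by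
  refine ⟨h.1, fun t ht => ?_⟩
  have ht' : t ∈ Icc (0:ℝ) T := ⟨ht.1, ht.2.trans hT⟩
  exact ⟨(h.2 t ht').1, (h.2 t ht').2.mono (Icc_subset_Icc le_rfl hT)⟩

lemma IsSol.continuousOn {x₀ : Fin N → ℝ} {T : ℝ} {f : ℝ → Fin N → ℝ}
    (h : IsSol x₀ T f) : ContinuousOn f (Icc 0 T) :=
  fun t ht => ((h.2 t ht).2).continuousWithinAt

lemma hasDerivWithinAt_Ici_of_Icc {E : Type*} [NormedAddCommGroup E] [NormedSpace ℝ E]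
    {f : ℝ → E} {v : E} {a b t : ℝ} (ht : t ∈ Ico a b)
    (h : HasDerivWithinAt f v (Icc a b) t) : HasDerivWithinAt f v (Ici t) t := by
  apply h.mono_of_mem_nhdsWithin
  have h1 : Icc t b ∈ nhdsWithin t (Ici t) := Icc_mem_nhdsGE_of_mem ⟨le_rfl, ht.2⟩
  exact Filter.mem_of_superset h1 (Icc_subset_Icc ht.1 le_rfl)

def kap (N : ℕ) : ℝ := ((pairs N).card : ℝ)

lemma kap_nonneg : 0 ≤ kap N := Nat.cast_nonneg _

def Hfun (x : Fin N → ℝ) : ℝ := ∑ p ∈ pairs N, Real.log (x p.1 - x p.2)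

def Dbd (x₀ : Fin N → ℝ) (Th : ℝ) : ℝ :=
  2 * Real.sqrt (∑ i, x₀ i ^ 2 + 2 * kap N * Th) + 1

lemma Dbd_ge_one (x₀ : Fin N → ℝ) (Th : ℝ) : 1 ≤ Dbd x₀ Th := by
  have := Real.sqrt_nonneg (∑ i, x₀ i ^ 2 + 2 * kap N * Th)
  unfold Dbd; linarith

def gapB (x₀ : Fin N → ℝ) (Th : ℝ) : ℝ :=
  Real.exp (Hfun x₀ - kap N * Real.log (Dbd x₀ Th))

lemma gapB_pos (x₀ : Fin N → ℝ) (Th : ℝ) : 0 < gapB x₀ Th := Real.exp_pos _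

theorem apriori {x₀ : Fin N → ℝ} {f : ℝ → Fin N → ℝ} {T Th : ℝ}
    (hT0 : 0 ≤ T) (hTh : T ≤ Th) (hf : IsSol x₀ T f) :
    ∀ t ∈ Icc (0:ℝ) T, f t ∈ Sgap (gapB x₀ Th) := by
  have hThnn : 0 ≤ Th := hT0.trans hTh
  have hdist : ∀ t ∈ Icc (0:ℝ) T, ∀ i j : Fin N, i ≠ j → f t i ≠ f t j := by
    intro t ht i j hij
    exact (hf.2 t ht).1.injective.ne hij
  have hco : ∀ t ∈ Icc (0:ℝ) T, ∀ i,
      HasDerivWithinAt (fun s => f s i) (vf (f t) i) (Icc 0 T) t := by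
    intro t ht i
    exact hasDerivWithinAt_pi.1 (hf.2 t ht).2 i
  -- the function V
  set V : ℝ → ℝ := fun s => ∑ i, (f s i) ^ 2 with hVdef
  have hV : ∀ t ∈ Icc (0:ℝ) T, HasDerivWithinAt V (2 * kap N) (Icc 0 T) t := by
    intro t ht
    have h1 : HasDerivWithinAt V (∑ i, 2 * f t i * vf (f t) i) (Icc 0 T) t := by
      refine HasDerivWithinAt.fun_sum fun i _ => ?_
      have := (hco t ht i).fun_pow 2
      simpa [pow_one, mul_comm, mul_assoc, mul_left_comm] using this
    rwa [sum_two_mul_vf (hdist t ht), ← kap] at h1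
  -- V is affine
  have hVval : ∀ t ∈ Icc (0:ℝ) T, V t = V 0 + 2 * kap N * t := by
    have hW : ∀ t ∈ Icc (0:ℝ) T,
        HasDerivWithinAt (fun s => V s - 2 * kap N * s) 0 (Icc 0 T) t := by
      intro t ht
      have hid : HasDerivWithinAt (fun s : ℝ => 2 * kap N * s) (2 * kap N) (Icc 0 T) t := by
        simpa using ((hasDerivAt_id t).const_mul (2 * kap N)).hasDerivWithinAt
      simpa using (hV t ht).fun_sub hid
    have hWc : ∀ t ∈ Icc (0:ℝ) T, V t - 2 * kap N * t = V 0 - 2 * kap N * 0 := by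
      intro t ht
      refine constant_of_has_deriv_right_zero (f := fun s => V s - 2 * kap N * s) (a := 0) (b := T) ?_ ?_ t ht
      · exact fun s hs => (hW s hs).continuousWithinAt
      · intro s hs
        exact hasDerivWithinAt_Ici_of_Icc hs (hW s ⟨hs.1, hs.2.le⟩)
    intro t ht
    have := hWc t ht
    linarith
  have hV0 : V 0 = ∑ i, x₀ i ^ 2 := by rw [hVdef]; simp [hf.1]
  -- coordinate bound
  set Rb : ℝ := Real.sqrt (∑ i, x₀ i ^ 2 + 2 * kap N * Th) with hRb
  have hcoord : ∀ t ∈ Icc (0:ℝ) T, ∀ i, |f t i| ≤ Rb := by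
    intro t ht i
    have h1 : (f t i) ^ 2 ≤ V t :=
      Finset.single_le_sum (f := fun i => (f t i) ^ 2) (fun j _ => sq_nonneg _)
        (Finset.mem_univ i)
    have h2 : V t ≤ ∑ i, x₀ i ^ 2 + 2 * kap N * Th := by
      rw [hVval t ht, hV0]
      have : 2 * kap N * t ≤ 2 * kap N * Th :=
        mul_le_mul_of_nonneg_left (ht.2.trans hTh) (by have := kap_nonneg (N := N); linarith)
      linarith
    calc |f t i| = Real.sqrt ((f t i) ^ 2) := (Real.sqrt_sq_eq_abs _).symm
      _ ≤ Rb := Real.sqrt_le_sqrt (h1.trans h2)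
  -- gap upper bound
  have hgapub : ∀ t ∈ Icc (0:ℝ) T, ∀ i j : Fin N, f t i - f t j ≤ Dbd x₀ Th := by
    intro t ht i j
    have hi := hcoord t ht i
    have hj := hcoord t ht j
    have h1 : f t i ≤ Rb := le_of_abs_le hi
    have h2 : -Rb ≤ f t j := neg_le_of_abs_le hj
    unfold Dbd
    rw [← hRb]
    linarith
  -- the function H
  set H : ℝ → ℝ := fun s => ∑ p ∈ pairs N, Real.log (f s p.1 - f s p.2) with hHdef
  have hgap_pos : ∀ t ∈ Icc (0:ℝ) T, ∀ p ∈ pairs N, 0 < f t p.1 - f t p.2 := by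
    intro t ht p hp
    have : p.1 < p.2 := (Finset.mem_filter.1 hp).2
    have := (hf.2 t ht).1 this
    linarith
  have hH : ∀ t ∈ Icc (0:ℝ) T, HasDerivWithinAt H
      (∑ p ∈ pairs N, (vf (f t) p.1 - vf (f t) p.2) / (f t p.1 - f t p.2)) (Icc 0 T) t := by
    intro t ht
    refine HasDerivWithinAt.fun_sum fun p hp => ?_
    exact ((hco t ht p.1).sub (hco t ht p.2)).log (ne_of_gt (hgap_pos t ht p hp))
  have hHmono : ∀ t ∈ Icc (0:ℝ) T, H 0 ≤ H t := by
    have := monotoneOn_of_hasDerivWithinAt_nonneg (convex_Icc (0:ℝ) T)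
      (f := H)
      (f' := fun t => ∑ p ∈ pairs N, (vf (f t) p.1 - vf (f t) p.2) / (f t p.1 - f t p.2))
      (fun t ht => (hH t ht).continuousWithinAt)
      (fun t ht => by
        rw [interior_Icc] at ht
        have := hH t (Ioo_subset_Icc_self ht)
        rw [interior_Icc]
        exact this.mono Ioo_subset_Icc_self)
      (fun t ht => by
        rw [interior_Icc] at ht
        show 0 ≤ ∑ p ∈ pairs N, (vf (f t) p.1 - vf (f t) p.2) / (f t p.1 - f t p.2)
        rw [sum_pairs_vf_sub (hdist t (Ioo_subset_Icc_self ht))]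
        exact Finset.sum_nonneg fun i _ => sq_nonneg _)
    intro t ht
    exact this (left_mem_Icc.2 hT0) ht ht.1
  have hH0 : H 0 = Hfun x₀ := by rw [hHdef]; simp [hf.1, Hfun]
  -- conclusion
  intro t ht i j hij
  have hpmem : (i, j) ∈ pairs N := Finset.mem_filter.2 ⟨Finset.mem_univ _, hij⟩
  set d : ℝ := f t i - f t j with hd
  have hd0 : 0 < d := hgap_pos t ht (i, j) hpmem
  have hsplit : Real.log d + ∑ p ∈ (pairs N).erase (i, j), Real.log (f t p.1 - f t p.2)
      = H t := by
    rw [hHdef]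
    rw [add_comm]
    exact Finset.sum_erase_add _ _ hpmem
  have hlogDnn : 0 ≤ Real.log (Dbd x₀ Th) := Real.log_nonneg (Dbd_ge_one _ _)
  have hsum_le : ∑ p ∈ (pairs N).erase (i, j), Real.log (f t p.1 - f t p.2)
      ≤ kap N * Real.log (Dbd x₀ Th) := by
    calc ∑ p ∈ (pairs N).erase (i, j), Real.log (f t p.1 - f t p.2)
        ≤ ∑ _p ∈ (pairs N).erase (i, j), Real.log (Dbd x₀ Th) := by
          refine Finset.sum_le_sum fun p hp => ?_
          have hpp : p ∈ pairs N := Finset.mem_of_mem_erase hp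
          exact Real.log_le_log (hgap_pos t ht p hpp) (hgapub t ht p.1 p.2)
      _ = ((pairs N).erase (i, j)).card * Real.log (Dbd x₀ Th) := by
          rw [Finset.sum_const, nsmul_eq_mul]
      _ ≤ kap N * Real.log (Dbd x₀ Th) := by
          refine mul_le_mul_of_nonneg_right ?_ hlogDnn
          unfold kap
          exact_mod_cast Finset.card_erase_le
  have hlogd : Hfun x₀ - kap N * Real.log (Dbd x₀ Th) ≤ Real.log d := by
    have h1 : H 0 ≤ H t := hHmono t ht
    rw [hH0] at h1
    linarith [hsplit, hsum_le, h1]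
  calc gapB x₀ Th = Real.exp (Hfun x₀ - kap N * Real.log (Dbd x₀ Th)) := rfl
    _ ≤ Real.exp (Real.log d) := Real.exp_le_exp.2 hlogd
    _ = d := Real.exp_log hd0

/-- The uniform time step for extending solutions, with horizon `Th`. -/
def delta (x₀ : Fin N → ℝ) (Th : ℝ) : ℝ :=
  min 1 (gapB x₀ Th / 4 / 2 / (2 * N / gapB x₀ Th + 1))

lemma delta_pos (x₀ : Fin N → ℝ) (Th : ℝ) : 0 < delta x₀ Th := by
  have h1 := gapB_pos x₀ Th
  have h2 : 0 < 2 * (N:ℝ) / gapB x₀ Th + 1 := by positivity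
  unfold delta
  positivity

lemma delta_le_one (x₀ : Fin N → ℝ) (Th : ℝ) : delta x₀ Th ≤ 1 := min_le_left _ _

theorem extend {x₀ : Fin N → ℝ} {f : ℝ → Fin N → ℝ} {T Th : ℝ}
    (hT0 : 0 ≤ T) (hsum : T + delta x₀ Th ≤ Th) (hf : IsSol x₀ T f) :
    ∃ g, IsSol x₀ (T + delta x₀ Th) g := by
  set ε : ℝ := gapB x₀ Th with hεdef
  have hε : 0 < ε := gapB_pos x₀ Th
  set R : ℝ := ε / 4 with hRdef
  set C : ℝ := 2 * N / ε with hCdef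
  have hC0 : 0 ≤ C := by positivity
  set δ : ℝ := delta x₀ Th with hδdef
  have hδ : 0 < δ := delta_pos x₀ Th
  have hδle : (C + 1) * δ ≤ R / 2 := by
    have h1 : δ ≤ R / 2 / (C + 1) := min_le_right _ _
    have h2 : 0 < C + 1 := by linarith
    calc (C + 1) * δ ≤ (C + 1) * (R / 2 / (C + 1)) := by nlinarith
      _ = R / 2 := by field_simp
  have hTTh : T ≤ Th := by linarith
  set y : Fin N → ℝ := f T with hydef
  have hy : y ∈ Sgap ε := apriori hT0 hTTh hf T ⟨hT0, le_rfl⟩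
  have hball : closedBall y R ⊆ Sgap (ε / 2) := by
    have h := closedBall_subset_Sgap (r := R) hy
    have : ε - 2 * R = ε / 2 := by rw [hRdef]; ring
    rwa [this] at h
  have hnormC : ∀ z ∈ closedBall y R, ‖vf z‖ ≤ C := by
    intro z hz
    have := norm_vf_le (half_pos hε) (hball hz)
    have heq : (N:ℝ) / (ε / 2) = C := by rw [hCdef]; field_simp
    rwa [heq] at this
  -- Picard-Lindelöf
  have hR0 : 0 ≤ R := by rw [hRdef]; positivity
  have hPL : IsPicardLindelof (fun _ x => vf x) (tmin := T) (tmax := T + δ)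
      ⟨T, le_rfl, by linarith⟩ y (Real.toNNReal R) 0 (Real.toNNReal C)
      (Real.toNNReal (2 * N / (ε / 2) ^ 2)) := by
    have hRc : ((Real.toNNReal R : ℝ≥0) : ℝ) = R := Real.coe_toNNReal _ hR0
    have hCc : ((Real.toNNReal C : ℝ≥0) : ℝ) = C := Real.coe_toNNReal _ hC0
    constructor
    · exact fun t _ => (vf_lipschitzOnWith (half_pos hε)).mono (by rw [hRc]; exact hball)
    · exact fun x _ => continuousOn_const
    · intro t _ x hx; rw [hCc]; rw [hRc] at hx; exact hnormC x hx
    · have : max (T + δ - T) (T - T) = δ := by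
        rw [max_eq_left (by linarith)]; ring
      show (Real.toNNReal C : ℝ) * max (T + δ - T) (T - T) ≤ (Real.toNNReal R : ℝ) - ((0:ℝ≥0):ℝ)
      rw [hRc, hCc, this, NNReal.coe_zero, sub_zero]
      nlinarith
  obtain ⟨h, hhT, hhd⟩ := hPL.exists_eq_forall_mem_Icc_hasDerivWithinAt₀
  replace hhT : h T = y := hhT
  -- invariance: h stays in the closed ball
  have hBle : ∀ s, s ≤ T + δ → (C + 1) * (s - T) + R / 2 ≤ R := by
    intro s hsle
    have h1 : s - T ≤ δ := by linarith
    have h2 : (C + 1) * (s - T) ≤ (C + 1) * δ := by nlinarith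
    linarith [hδle]
  have hcont : ContinuousOn (fun s => h s - y) (Icc T (T + δ)) :=
    ContinuousOn.sub (fun s hs => (hhd s hs).continuousWithinAt) continuousOn_const
  have hderiv : ∀ s ∈ Ico T (T + δ),
      HasDerivWithinAt (fun s => h s - y) (vf (h s)) (Ici s) s := by
    intro s hs
    exact (hasDerivWithinAt_Ici_of_Icc hs (hhd s ⟨hs.1, hs.2.le⟩)).sub_const y
  have hinit : ‖h T - y‖ ≤ (C + 1) * (T - T) + R / 2 := by
    rw [hhT]; simp; positivity
  have hB : ∀ s : ℝ, HasDerivAt (fun s => (C + 1) * (s - T) + R / 2) (C + 1) s := by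
    intro s
    have : HasDerivAt (fun s => (C + 1) * (s - T) + R / 2) ((C + 1) * 1) s :=
      (((hasDerivAt_id s).sub_const T).const_mul (C + 1)).add_const (R / 2)
    simpa using this
  have hbound : ∀ s ∈ Ico T (T + δ), ‖(fun s => h s - y) s‖ = (C + 1) * (s - T) + R / 2 →
      ‖vf (h s)‖ < C + 1 := by
    intro s hs hnorm
    have hmem : h s ∈ closedBall y R := by
      rw [mem_closedBall, dist_eq_norm]
      calc ‖h s - y‖ = (C + 1) * (s - T) + R / 2 := hnorm
        _ ≤ R := hBle s hs.2.le
    have := hnormC _ hmem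
    linarith
  have hinv : ∀ s ∈ Icc T (T + δ), h s ∈ closedBall y R := by
    intro s hs
    have key := image_norm_le_of_norm_deriv_right_lt_deriv_boundary
      (f := fun s => h s - y) (f' := fun s => vf (h s)) (a := T) (b := T + δ)
      (B := fun s => (C + 1) * (s - T) + R / 2) (B' := fun _ => C + 1)
      hcont hderiv hinit hB hbound hs
    rw [mem_closedBall, dist_eq_norm]
    calc ‖h s - y‖ ≤ (C + 1) * (s - T) + R / 2 := key
      _ ≤ R := hBle s hs.2
  -- glue
  set g : ℝ → Fin N → ℝ := fun s => if s ≤ T then f s else h s with hgdef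
  have hgle : ∀ s, s ≤ T → g s = f s := fun s hs => if_pos hs
  have hfTy : f T = h T := hhT.symm
  have hgge : ∀ s, T ≤ s → g s = h s := by
    intro s hs
    by_cases hc : s ≤ T
    · have hst : s = T := le_antisymm hc hs
      rw [hgle s hc, hst, hfTy]
    · exact if_neg hc
  refine ⟨g, ?_, ?_⟩
  · rw [hgle 0 hT0]; exact hf.1
  intro s hs
  rcases lt_trichotomy s T with hlt | heq | hgt
  · -- s < T
    have hs' : s ∈ Icc (0:ℝ) T := ⟨hs.1, hlt.le⟩
    have hmem : Icc (0:ℝ) T ∈ nhdsWithin s (Icc 0 (T + δ)) := by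
      refine Filter.mem_of_superset
        (Filter.inter_mem self_mem_nhdsWithin
          (mem_nhdsWithin_of_mem_nhds (Iic_mem_nhds hlt))) ?_
      rintro x ⟨hx1, hx2⟩
      exact ⟨hx1.1, hx2⟩
    have hIic : Iic T ∈ nhdsWithin s (Icc 0 (T + δ)) :=
      mem_nhdsWithin_of_mem_nhds (Iic_mem_nhds hlt)
    constructor
    · rw [hgle s hlt.le]; exact (hf.2 s hs').1
    · have hd := ((hf.2 s hs').2).mono_of_mem_nhdsWithin hmem
      have hev : g =ᶠ[nhdsWithin s (Icc 0 (T + δ))] f := by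
        filter_upwards [hIic] with x hx
        exact hgle x hx
      have e : g s = f s := hgle s hlt.le
      have h2 := hd.congr_of_eventuallyEq hev e
      rwa [← e] at h2
  · -- s = T
    subst heq
    have hsT : s ∈ Icc (0:ℝ) s := ⟨hs.1, le_rfl⟩
    have e1 : g s = f s := hgle s le_rfl
    have e2 : g s = h s := hgge s le_rfl
    constructor
    · rw [e1]; exact (hf.2 s hsT).1
    · have hleft : HasDerivWithinAt g (vf (g s)) (Icc 0 s) s := by
        have := ((hf.2 s hsT).2).congr (fun x hx => hgle x hx.2) e1
        rwa [← e1] at this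
      have hright : HasDerivWithinAt g (vf (g s)) (Icc s (s + δ)) s := by
        have hd := hhd s ⟨le_rfl, by linarith⟩
        have := hd.congr (fun x hx => hgge x hx.1) e2
        rwa [← e2] at this
      have := hleft.union hright
      rwa [Set.Icc_union_Icc_eq_Icc hs.1 (by linarith)] at this
  · -- s > T
    have hs' : s ∈ Icc T (T + δ) := ⟨hgt.le, hs.2⟩
    have hmem : Icc T (T + δ) ∈ nhdsWithin s (Icc 0 (T + δ)) := by
      refine Filter.mem_of_superset
        (Filter.inter_mem self_mem_nhdsWithin
          (mem_nhdsWithin_of_mem_nhds (Filter.mem_of_superset (Ioi_mem_nhds hgt) Ioi_subset_Ici_self))) ?_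
      rintro x ⟨hx1, hx2⟩
      exact ⟨hx2, hx1.2⟩
    have hIci : Ici T ∈ nhdsWithin s (Icc 0 (T + δ)) :=
      mem_nhdsWithin_of_mem_nhds (Filter.mem_of_superset (Ioi_mem_nhds hgt) Ioi_subset_Ici_self)
    constructor
    · rw [hgge s hgt.le]
      exact strictAnti_of_mem_Sgap (half_pos hε) (hball (hinv s hs'))
    · have hd := (hhd s hs').mono_of_mem_nhdsWithin hmem
      have hev : g =ᶠ[nhdsWithin s (Icc 0 (T + δ))] h := by
        filter_upwards [hIci] with x hx
        exact hgge x hx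
      have e : g s = h s := hgge s hgt.le
      have h2 := hd.congr_of_eventuallyEq hev e
      rwa [← e] at h2

theorem exists_sol {x₀ : Fin N → ℝ} (hx₀ : StrictAnti x₀) (Ttar : ℝ) (hTtar : 0 ≤ Ttar) :
    ∃ f, IsSol x₀ Ttar f := by
  set Th : ℝ := Ttar + 1 with hThdef
  set δ : ℝ := delta x₀ Th with hδdef
  have hδpos : 0 < δ := delta_pos x₀ Th
  have hδ1 : δ ≤ 1 := delta_le_one x₀ Th
  have base : IsSol x₀ 0 (fun _ => x₀) := by
    refine ⟨rfl, fun t ht => ?_⟩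
    have ht0 : t = 0 := le_antisymm ht.2 ht.1
    subst ht0
    refine ⟨hx₀, ?_⟩
    rw [Set.Icc_self]
    rw [hasDerivWithinAt_iff_isLittleO, nhdsWithin_singleton, Asymptotics.isLittleO_pure]
    simp
  have claim : ∀ n : ℕ, ∃ T f, IsSol x₀ T f ∧ 0 ≤ T ∧
      (T = Ttar ∨ (T ≤ Ttar ∧ (n:ℝ) * δ ≤ T)) := by
    intro n
    induction n with
    | zero => exact ⟨0, fun _ => x₀, base, le_rfl, Or.inr ⟨hTtar, by simp⟩⟩
    | succ n ih =>
      obtain ⟨T, f, hsol, hT0, hcase⟩ := ih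
      rcases hcase with hTt | ⟨hTle, hnT⟩
      · exact ⟨T, f, hsol, hT0, Or.inl hTt⟩
      · have hsum : T + δ ≤ Th := by rw [hThdef]; linarith
        obtain ⟨g, hg⟩ := extend hT0 hsum hsol
        by_cases hc : Ttar ≤ T + δ
        · exact ⟨Ttar, g, hg.restrict hTtar hc, hTtar, Or.inl rfl⟩
        · refine ⟨T + δ, g, hg, by linarith, Or.inr ⟨by linarith, ?_⟩⟩
          push_cast
          nlinarith
  obtain ⟨n, hn⟩ := exists_nat_gt (Ttar / δ)
  have hbig : Ttar < n * δ := by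
    rw [div_lt_iff₀ hδpos] at hn
    linarith
  obtain ⟨T, f, hsol, hT0, hcase⟩ := claim n
  rcases hcase with rfl | ⟨hTle, hnT⟩
  · exact ⟨f, hsol⟩
  · linarith

theorem unique_core (hN : 2 ≤ N) {f g : ℝ → Fin N → ℝ} {b : ℝ} (hb : 0 ≤ b)
    (hfc : ContinuousOn f (Icc 0 b))
    (hfd : ∀ t ∈ Ico (0:ℝ) b, HasDerivWithinAt f (vf (f t)) (Ici t) t)
    (hfa : ∀ t ∈ Icc (0:ℝ) b, StrictAnti (f t))
    (hgc : ContinuousOn g (Icc 0 b))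
    (hgd : ∀ t ∈ Ico (0:ℝ) b, HasDerivWithinAt g (vf (g t)) (Ici t) t)
    (hga : ∀ t ∈ Icc (0:ℝ) b, StrictAnti (g t))
    (h0 : f 0 = g 0) : EqOn f g (Icc 0 b) := by
  have hne : (pairs N).Nonempty := by
    refine ⟨(⟨0, by omega⟩, ⟨1, by omega⟩), ?_⟩
    exact Finset.mem_filter.2 ⟨Finset.mem_univ _, by exact Fin.mk_lt_mk.2 (by omega)⟩
  have hex : ∀ p : Fin N × Fin N, ∃ ε : ℝ, p.1 < p.2 →
      (0 < ε ∧ ∀ t ∈ Icc (0:ℝ) b, ε ≤ f t p.1 - f t p.2 ∧ ε ≤ g t p.1 - g t p.2) := by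
    intro p
    by_cases hp : p.1 < p.2
    · set u : ℝ → ℝ := fun t => min (f t p.1 - f t p.2) (g t p.1 - g t p.2) with hu
      have c1 : ContinuousOn (fun t => f t p.1 - f t p.2) (Icc 0 b) :=
        ((continuous_apply p.1).comp_continuousOn hfc).sub
          ((continuous_apply p.2).comp_continuousOn hfc)
      have c2 : ContinuousOn (fun t => g t p.1 - g t p.2) (Icc 0 b) :=
        ((continuous_apply p.1).comp_continuousOn hgc).sub
          ((continuous_apply p.2).comp_continuousOn hgc)
      have hucont : ContinuousOn u (Icc 0 b) := fun t ht => (c1 t ht).min (c2 t ht)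
      obtain ⟨t0, ht0, hmin⟩ := isCompact_Icc.exists_isMinOn ⟨0, left_mem_Icc.2 hb⟩ hucont
      refine ⟨u t0, fun _ => ⟨?_, ?_⟩⟩
      · exact lt_min (sub_pos.2 (hfa t0 ht0 hp)) (sub_pos.2 (hga t0 ht0 hp))
      · intro t ht
        have h1 : u t0 ≤ u t := hmin ht
        exact ⟨h1.trans (min_le_left _ _), h1.trans (min_le_right _ _)⟩
    · exact ⟨1, fun h => absurd h hp⟩
  choose E hE using hex
  set ε : ℝ := (pairs N).inf' hne E with hεdef
  have hεpos : 0 < ε := by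
    rw [hεdef, Finset.lt_inf'_iff]
    intro p hp
    exact (hE p (Finset.mem_filter.1 hp).2).1
  have hmemf : ∀ t ∈ Icc (0:ℝ) b, f t ∈ Sgap ε ∧ g t ∈ Sgap ε := by
    intro t ht
    constructor
    · intro i j hij
      have hm : ((i, j) : Fin N × Fin N) ∈ pairs N :=
        Finset.mem_filter.2 ⟨Finset.mem_univ _, hij⟩
      have h1 : ε ≤ E (i, j) := by
        rw [hεdef]; exact Finset.inf'_le E hm
      exact h1.trans ((hE (i, j) hij).2 t ht).1
    · intro i j hij
      have hm : ((i, j) : Fin N × Fin N) ∈ pairs N :=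
        Finset.mem_filter.2 ⟨Finset.mem_univ _, hij⟩
      have h1 : ε ≤ E (i, j) := by
        rw [hεdef]; exact Finset.inf'_le E hm
      exact h1.trans ((hE (i, j) hij).2 t ht).2
  exact ODE_solution_unique_of_mem_Icc_right
    (v := fun _ x => vf x) (s := fun _ => Sgap ε)
    (fun _ _ => vf_lipschitzOnWith hεpos)
    hfc hfd (fun t ht => (hmemf t ⟨ht.1, ht.2.le⟩).1)
    hgc hgd (fun t ht => (hmemf t ⟨ht.1, ht.2.le⟩).2)
    h0


end DysonAux

/-- The interior of the closed Weyl chamber of type A,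
`C_N^A = {x : x_1 ≥ x_2 ≥ … ≥ x_N}`: strictly decreasing coordinates. -/
def interiorA {N : ℕ} (x : Fin N → ℝ) : Prop := StrictAnti x

/-- `φ` solves the ODE of type `A_{N-1}`,
`dx_i/dt = ∑_{j ≠ i} 1/(x_i - x_j)`, on `[0,∞)`. -/
def solvesA {N : ℕ} (φ : ℝ → Fin N → ℝ) : Prop :=
  ∀ t ∈ Set.Ici (0:ℝ), ∀ i : Fin N,
    HasDerivWithinAt (fun s => φ s i)
      (∑ j ∈ Finset.univ.erase i, 1 / (φ t i - φ t j)) (Set.Ici 0) t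

open DysonAux

/-- Existence and uniqueness of the solution of the ODE of type `A_{N-1}`
starting at a point in the interior of the Weyl chamber, staying in the
interior for all times `t ≥ 0`. -/
theorem statement0 (N : ℕ) (hN : 2 ≤ N) (x₀ : Fin N → ℝ) (hx₀ : interiorA x₀) :
    ∃ φ : ℝ → Fin N → ℝ,
      (φ 0 = x₀ ∧ (∀ t ∈ Set.Ici (0:ℝ), interiorA (φ t)) ∧ solvesA φ) ∧
      (∀ ψ : ℝ → Fin N → ℝ,
        (ψ 0 = x₀ ∧ (∀ t ∈ Set.Ici (0:ℝ), interiorA (ψ t)) ∧ solvesA ψ) →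
        ∀ t ∈ Set.Ici (0:ℝ), ψ t = φ t) := by
  have hx₀' : StrictAnti x₀ := hx₀
  -- choose solutions up to each natural time
  have hsol : ∀ n : ℕ, ∃ f, IsSol x₀ (n:ℝ) f :=
    fun n => exists_sol hx₀' n (Nat.cast_nonneg n)
  choose g hg using hsol
  -- any two solutions on a common interval agree
  have hIccEq : ∀ (T : ℝ), 0 ≤ T → ∀ f f' : ℝ → Fin N → ℝ,
      IsSol x₀ T f → IsSol x₀ T f' → EqOn f f' (Icc 0 T) := by
    intro T hT f f' hf hf'
    refine unique_core hN hT hf.continuousOn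
      (fun t ht => hasDerivWithinAt_Ici_of_Icc ht ((hf.2 t ⟨ht.1, ht.2.le⟩).2))
      (fun t ht => (hf.2 t ht).1)
      hf'.continuousOn
      (fun t ht => hasDerivWithinAt_Ici_of_Icc ht ((hf'.2 t ⟨ht.1, ht.2.le⟩).2))
      (fun t ht => (hf'.2 t ht).1)
      (hf.1.trans hf'.1.symm)
  have hagree : ∀ m n : ℕ, m ≤ n → ∀ t ∈ Icc (0:ℝ) (m:ℝ), g m t = g n t := by
    intro m n hmn
    exact hIccEq m (Nat.cast_nonneg m) (g m) (g n) (hg m)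
      ((hg n).restrict (Nat.cast_nonneg m) (by exact_mod_cast hmn))
  set φ : ℝ → Fin N → ℝ := fun t => g ⌈t⌉₊ t with hφdef
  have hφeq : ∀ n : ℕ, ∀ t ∈ Icc (0:ℝ) (n:ℝ), φ t = g n t := by
    intro n t ht
    show g ⌈t⌉₊ t = g n t
    rcases le_total (⌈t⌉₊ : ℕ) n with hc | hc
    · exact hagree ⌈t⌉₊ n hc t ⟨ht.1, Nat.le_ceil t⟩
    · exact (hagree n ⌈t⌉₊ hc t ht).symm
  have hφ0 : φ 0 = x₀ := by
    have := hφeq 0 0 (by simp)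
    rw [this]
    exact (hg 0).1
  have hφanti : ∀ t ∈ Ici (0:ℝ), StrictAnti (φ t) := by
    intro t ht
    have htm : t ∈ Icc (0:ℝ) (⌈t⌉₊:ℝ) := ⟨ht, Nat.le_ceil t⟩
    rw [hφeq ⌈t⌉₊ t htm]
    exact ((hg ⌈t⌉₊).2 t htm).1
  have hφderiv : ∀ t ∈ Ici (0:ℝ), HasDerivWithinAt φ (vf (φ t)) (Ici 0) t := by
    intro t ht
    set n : ℕ := ⌈t⌉₊ + 1 with hn
    have htn : t < (n:ℝ) := by
      have h1 : t ≤ (⌈t⌉₊:ℝ) := Nat.le_ceil t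
      have h2 : ((⌈t⌉₊:ℝ)) < n := by rw [hn]; push_cast; linarith
      linarith
    have htm : t ∈ Icc (0:ℝ) (n:ℝ) := ⟨ht, htn.le⟩
    have hd := ((hg n).2 t htm).2
    have hmem : Icc (0:ℝ) (n:ℝ) ∈ nhdsWithin t (Ici 0) := by
      have h1 : Ici (0:ℝ) ∩ Iic (n:ℝ) ∈ nhdsWithin t (Ici 0) :=
        Filter.inter_mem self_mem_nhdsWithin
          (mem_nhdsWithin_of_mem_nhds (Iic_mem_nhds htn))
      rwa [Set.Ici_inter_Iic] at h1
    have hd2 := hd.mono_of_mem_nhdsWithin hmem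
    have hev : φ =ᶠ[nhdsWithin t (Ici 0)] g n := by
      filter_upwards [hmem] with x hx
      exact hφeq n x hx
    have e : φ t = g n t := hφeq n t htm
    have h3 := hd2.congr_of_eventuallyEq hev e
    rwa [← e] at h3
  refine ⟨φ, ⟨hφ0, hφanti, ?_⟩, ?_⟩
  · -- solvesA
    intro t ht i
    have := hasDerivWithinAt_pi.1 (hφderiv t ht) i
    simpa [vf, one_div] using this
  · -- uniqueness
    rintro ψ ⟨hψ0, hψanti, hψs⟩ t ht
    have hψd : ∀ s ∈ Ici (0:ℝ), HasDerivWithinAt ψ (vf (ψ s)) (Ici 0) s := by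
      intro s hs
      have := hasDerivWithinAt_pi.2 (fun i => hψs s hs i)
      refine this.congr_deriv ?_
      funext i
      simp [vf, one_div]
    have key := unique_core hN ht
      (fun s hs => ((hψd s hs.1).continuousWithinAt).mono (fun x hx => hx.1))
      (fun s hs => (hψd s hs.1).mono (Ici_subset_Ici.2 hs.1))
      (fun s hs => hψanti s hs.1)
      (fun s hs => ((hφderiv s hs.1).continuousWithinAt).mono (fun x hx => hx.1))
      (fun s hs => (hφderiv s hs.1).mono (Ici_subset_Ici.2 hs.1))
      (fun s hs => hφanti s hs.1)
      (hψ0.trans hφ0.symm)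
    exact key ⟨ht, le_rfl⟩
end
end

section
/- Let N ≥ 2 and let z_1 > z_2 > … > z_N be real numbers that are precisely the zeros of the N-th physicists' Hermite polynomial H_N, and set z := (z_1,…,z_N). Then for every c > 0 the function φ(t) := √(2t + c²) · z on [0,∞) takes values in the interior of C_N^A, satisfies φ(0) = c·z, and solves the ODE of type A_{N−1}: φ_i'(t) = ∑_{j≠i} 1/(φ_i(t) − φ_j(t)) for all i and all t ≥ 0. -/
open scoped BigOperators

noncomputable section

open Polynomial

noncomputable def PH : ℕ → Polynomial ℝ
  | 0 => 1
  | (n+1) => C 2 * X * PH n - derivative (PH n)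

lemma PH_rodrigues (n : ℕ) (x : ℝ) :
    iteratedDeriv n (fun y => Real.exp (-y^2)) x
      = (-1:ℝ)^n * (PH n).eval x * Real.exp (-x^2) := by
  induction n generalizing x with
  | zero => simp [PH]
  | succ n ih =>
    rw [iteratedDeriv_succ]
    have hfun : iteratedDeriv n (fun y => Real.exp (-y^2))
        = fun x => (-1:ℝ)^n * (PH n).eval x * Real.exp (-x^2) := funext ih
    rw [hfun]
    have h1 : HasDerivAt (fun x : ℝ => (-1:ℝ)^n * (PH n).eval x * Real.exp (-x^2))
        ((-1:ℝ)^n * (derivative (PH n)).eval x * Real.exp (-x^2)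
          + (-1:ℝ)^n * (PH n).eval x * (Real.exp (-x^2) * (-(2*x)))) x := by
      have hp : HasDerivAt (fun x : ℝ => (-1:ℝ)^n * (PH n).eval x)
          ((-1:ℝ)^n * (derivative (PH n)).eval x) x := ((PH n).hasDerivAt x).const_mul _
      have he : HasDerivAt (fun x : ℝ => Real.exp (-x^2)) (Real.exp (-x^2) * (-(2*x))) x := by
        have : HasDerivAt (fun x : ℝ => -x^2) (-(2*x)) x := by
          simpa using (hasDerivAt_pow 2 x).fun_neg
        exact this.exp
      simpa [mul_assoc] using hp.fun_mul he
    rw [h1.deriv]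
    simp only [PH, eval_sub, eval_mul, eval_C, eval_X]
    ring

lemma physHermite_eq_eval (n : ℕ) (x : ℝ) :
    (-1:ℝ)^n * Real.exp (x^2) * iteratedDeriv n (fun y => Real.exp (-y^2)) x
      = (PH n).eval x := by
  rw [PH_rodrigues]
  have h1 : ((-1:ℝ)^n)*((-1:ℝ)^n) = 1 := by
    rw [← pow_add, ← two_mul, pow_mul]; norm_num
  have h2 : Real.exp (x^2) * Real.exp (-x^2) = 1 := by
    rw [← Real.exp_add]; simp
  calc (-1:ℝ)^n * Real.exp (x^2) * ((-1:ℝ)^n * eval x (PH n) * Real.exp (-x^2))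
      = (((-1:ℝ)^n)*((-1:ℝ)^n)) * (Real.exp (x^2) * Real.exp (-x^2)) * eval x (PH n) := by ring
    _ = eval x (PH n) := by rw [h1, h2]; ring

lemma PH_natDegree_le (n : ℕ) : (PH n).natDegree ≤ n := by
  induction n with
  | zero => simp [PH]
  | succ n ih =>
    rw [PH]
    apply (natDegree_sub_le _ _).trans
    simp only [max_le_iff]
    constructor
    · apply (natDegree_mul_le).trans
      have : (C (2:ℝ) * X).natDegree ≤ 1 := by
        simpa using natDegree_C_mul_le (2:ℝ) X
      omega
    · have h1 := natDegree_derivative_le (PH n)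
      omega

lemma PH_coeff (n : ℕ) : (PH n).coeff n = 2^n := by
  induction n with
  | zero => simp [PH]
  | succ n ih =>
    rw [PH]
    rw [coeff_sub, mul_assoc, coeff_C_mul, coeff_X_mul, ih, coeff_derivative]
    have : (PH n).coeff (n+1+1) = 0 :=
      coeff_eq_zero_of_natDegree_lt (by have := PH_natDegree_le n; omega)
    rw [this]
    ring

lemma PH_deriv (n : ℕ) : derivative (PH (n+1)) = C (2*(n+1) : ℝ) * PH n := by
  induction n with
  | zero =>
    show derivative (C 2 * X * PH 0 - derivative (PH 0)) = _
    simp [PH]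
  | succ n ih =>
    show derivative (C 2 * X * PH (n+1) - derivative (PH (n+1))) = _
    rw [derivative_sub, derivative_mul, derivative_mul, ih, derivative_C, derivative_X,
      derivative_mul, derivative_C]
    have hrec : PH (n+1+1) = C (2:ℝ) * X * PH (n+1) - derivative (PH (n+1)) := rfl
    have hrec2 : PH (n+1) = C (2:ℝ) * X * PH n - derivative (PH n) := rfl
    rw [hrec2]
    push_cast
    simp only [map_mul, map_add, map_one, map_ofNat]
    ring

lemma PH_ode (n : ℕ) :
    derivative (derivative (PH n)) = C 2 * X * derivative (PH n) - C (2*n : ℝ) * PH n := by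
  cases n with
  | zero => simp [PH]
  | succ n =>
    rw [PH_deriv, derivative_mul, derivative_C]
    have hrec : PH (n+1) = C (2:ℝ) * X * PH n - derivative (PH n) := rfl
    rw [hrec]
    push_cast
    ring

lemma eval_derivative_prod {ι : Type*} [DecidableEq ι] (s : Finset ι) (z : ι → ℝ) (x : ℝ) :
    eval x (derivative (∏ j ∈ s, (X - C (z j)))) = ∑ k ∈ s, ∏ j ∈ s.erase k, (x - z j) := by
  induction s using Finset.induction_on with
  | empty => simp
  | @insert a s ha ih =>
    rw [Finset.prod_insert ha, derivative_mul, Finset.sum_insert ha, Finset.erase_insert ha]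
    simp only [derivative_sub, derivative_X, derivative_C, sub_zero, one_mul, eval_add, eval_mul,
      eval_sub, eval_X, eval_C, ih, eval_prod]
    rw [Finset.mul_sum]
    congr 1
    apply Finset.sum_congr rfl
    intro k hk
    have hka : k ≠ a := fun h => ha (h ▸ hk)
    rw [Finset.erase_insert_of_ne hka.symm, Finset.prod_insert
      (fun h => ha (Finset.erase_subset _ _ h))]

lemma PH_eq_prod (N : ℕ) (z : Fin N → ℝ) (hz : Function.Injective z)
    (heval : ∀ i, (PH N).eval (z i) = 0) :
    PH N = C ((2:ℝ)^N) * ∏ j, (X - C (z j)) := by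
  set Q : Polynomial ℝ := ∏ j, (X - C (z j)) with hQ
  have hQmonic : Q.Monic := monic_prod_of_monic _ _ (fun j _ => monic_X_sub_C (z j))
  have hQdeg : Q.natDegree = N := by
    rw [hQ, natDegree_prod_of_monic _ _ (fun j _ => monic_X_sub_C (z j))]
    simp
  set D : Polynomial ℝ := PH N - C ((2:ℝ)^N) * Q with hD
  have hcoeff : D.coeff N = 0 := by
    rw [hD, coeff_sub, PH_coeff, coeff_C_mul]
    have : Q.coeff N = 1 := by
      rw [← hQdeg]; exact hQmonic.coeff_natDegree
    rw [this]; ring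
  have hDdeg : D.natDegree ≤ N := by
    apply (natDegree_sub_le _ _).trans
    simp only [max_le_iff]
    refine ⟨PH_natDegree_le N, ?_⟩
    apply natDegree_mul_le.trans
    simp [hQdeg]
  have hDzero : D = 0 := by
    by_cases h0 : D = 0
    · exact h0
    · apply Polynomial.eq_zero_of_natDegree_lt_card_of_eval_eq_zero D hz
      · intro i
        rw [hD]
        simp only [eval_sub, eval_mul, eval_C, heval i]
        rw [hQ, eval_prod]
        rw [Finset.prod_eq_zero (Finset.mem_univ i) (by simp)]
        ring
      · rw [Fintype.card_fin]
        rcases lt_or_eq_of_le hDdeg with h | h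
        · exact h
        · exfalso
          apply h0
          rw [← leadingCoeff_eq_zero, leadingCoeff, h, hcoeff]
  have := sub_eq_zero.mp hDzero
  exact this

lemma hermite_sum (N : ℕ) (z : Fin N → ℝ) (hz : Function.Injective z)
    (heval : ∀ i, (PH N).eval (z i) = 0) (i : Fin N) :
    ∑ j ∈ Finset.univ.erase i, 1 / (z i - z j) = z i := by
  classical
  have hPQ := PH_eq_prod N z hz heval
  set R : Polynomial ℝ := ∏ j ∈ Finset.univ.erase i, (X - C (z j)) with hR
  have hQsplit : (∏ j, (X - C (z j))) = (X - C (z i)) * R :=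
    (Finset.mul_prod_erase Finset.univ _ (Finset.mem_univ i)).symm
  set P : ℝ := ∏ j ∈ Finset.univ.erase i, (z i - z j) with hP
  have hPne : P ≠ 0 := by
    rw [hP]
    apply Finset.prod_ne_zero_iff.mpr
    intro j hj
    have : z i ≠ z j := fun h => (Finset.mem_erase.mp hj).1 (hz h).symm
    exact sub_ne_zero.mpr this
  have hevalR : R.eval (z i) = P := by rw [hR, eval_prod]; simp [hP]
  -- eval of first derivative of PH N at z i
  have hD1 : (derivative (PH N)).eval (z i) = 2^N * P := by
    rw [hPQ, hQsplit, derivative_C_mul, derivative_mul]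
    simp [hevalR]
  -- eval of second derivative
  have hD2 : (derivative (derivative (PH N))).eval (z i)
      = 2^N * (2 * (derivative R).eval (z i)) := by
    rw [hPQ, hQsplit, derivative_C_mul, derivative_C_mul, derivative_mul, derivative_add,
      derivative_mul]
    simp only [derivative_sub, derivative_X, derivative_C, sub_zero, one_mul, zero_mul]
    simp [eval_add, eval_mul]
    ring
  -- the ODE at z i
  have hode := congrArg (eval (z i)) (PH_ode N)
  simp only [eval_sub, eval_mul, eval_C, eval_X, heval i, mul_zero, sub_zero] at hode
  rw [hD1, hD2] at hode
  have hderivR : (derivative R).eval (z i) = z i * P := by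
    have h2N : (2:ℝ)^N ≠ 0 := by positivity
    have h1 : (2:ℝ)^N * (2 * (derivative R).eval (z i)) = (2:ℝ)^N * (2 * (z i * P)) := by
      linear_combination hode
    have h2 := mul_left_cancel₀ h2N h1
    linarith
  -- expand derivative R eval as sum
  have hsum : (derivative R).eval (z i)
      = ∑ k ∈ Finset.univ.erase i, ∏ j ∈ (Finset.univ.erase i).erase k, (z i - z j) := by
    rw [hR]; exact eval_derivative_prod _ _ _
  -- conclude
  have key : (∑ j ∈ Finset.univ.erase i, 1 / (z i - z j)) * P = z i * P := by
    rw [Finset.sum_mul, ← hderivR, hsum]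
    apply Finset.sum_congr rfl
    intro k hk
    have hzk : z i - z k ≠ 0 := by
      have : z i ≠ z k := fun h => (Finset.mem_erase.mp hk).1 (hz h).symm
      exact sub_ne_zero.mpr this
    rw [hP, ← Finset.mul_prod_erase _ _ hk]
    field_simp
  exact mul_right_cancel₀ hPne key

/-- The `n`-th physicists' Hermite polynomial (as a function),
`H_n(x) = (-1)^n e^{x²} (d/dx)^n e^{-x²}`. -/
def physHermite (n : ℕ) (x : ℝ) : ℝ :=
  (-1 : ℝ)^n * Real.exp (x^2) * iteratedDeriv n (fun y => Real.exp (-y^2)) x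

/-- For `z` the vector of ordered zeros of the Hermite polynomial `H_N` and `c > 0`,
`φ(t) = √(2t + c²)·z` solves the ODE of type `A_{N-1}` with `φ(0) = c·z`, staying in
the interior of the Weyl chamber. -/
theorem statement1 (N : ℕ) (hN : 2 ≤ N) (z : Fin N → ℝ) (hz : StrictAnti z)
    (hzero : ∀ i, physHermite N (z i) = 0)
    (hall : ∀ w : ℝ, physHermite N w = 0 → ∃ i, w = z i)
    (c : ℝ) (hc : 0 < c) :
    (∀ t ∈ Set.Ici (0:ℝ), interiorA (fun i => Real.sqrt (2*t + c^2) * z i)) ∧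
    ((fun i => Real.sqrt (2*0 + c^2) * z i) = fun i => c * z i) ∧
    solvesA (fun t i => Real.sqrt (2*t + c^2) * z i) := by
  have hzero' : ∀ i, (PH N).eval (z i) = 0 := by
    intro i
    have h := hzero i
    rw [physHermite, physHermite_eq_eval] at h
    exact h
  have hsum := hermite_sum N z hz.injective hzero'
  have hposc : (0:ℝ) < c^2 := by positivity
  refine ⟨?_, ?_, ?_⟩
  · intro t ht
    have hpos : 0 < 2*t + c^2 := by
      have : (0:ℝ) ≤ t := ht
      linarith
    have hs : 0 < Real.sqrt (2*t + c^2) := Real.sqrt_pos.mpr hpos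
    intro i j hij
    exact mul_lt_mul_of_pos_left (hz hij) hs
  · funext i
    rw [show (2*(0:ℝ) + c^2) = c^2 by ring, Real.sqrt_sq hc.le]
  · intro t ht i
    have htt : (0:ℝ) ≤ t := ht
    have hpos : 0 < 2*t + c^2 := by linarith
    have hs : 0 < Real.sqrt (2*t + c^2) := Real.sqrt_pos.mpr hpos
    have hderiv : HasDerivWithinAt (fun s => Real.sqrt (2*s + c^2))
        (1 / Real.sqrt (2*t + c^2)) (Set.Ici 0) t := by
      have h1 : HasDerivWithinAt (fun s : ℝ => 2*s + c^2) 2 (Set.Ici 0) t := by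
        simpa using ((hasDerivWithinAt_id t (Set.Ici 0)).const_mul (2:ℝ)).add_const (c^2)
      have h2 : HasDerivAt Real.sqrt (1 / (2 * Real.sqrt (2*t + c^2))) (2*t + c^2) :=
        Real.hasDerivAt_sqrt hpos.ne'
      have h3 := h2.comp_hasDerivWithinAt t h1
      refine h3.congr_deriv ?_
      field_simp
    have hmain := hderiv.mul_const (z i)
    have heq : (∑ j ∈ Finset.univ.erase i,
          1 / (Real.sqrt (2*t + c^2) * z i - Real.sqrt (2*t + c^2) * z j))
        = 1 / Real.sqrt (2*t + c^2) * z i := by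
      calc ∑ j ∈ Finset.univ.erase i,
              1 / (Real.sqrt (2*t + c^2) * z i - Real.sqrt (2*t + c^2) * z j)
          = ∑ j ∈ Finset.univ.erase i, 1 / Real.sqrt (2*t + c^2) * (1 / (z i - z j)) :=
            Finset.sum_congr rfl (fun j hj => by
              rw [← mul_sub, one_div, mul_inv, ← one_div, ← one_div])
        _ = 1 / Real.sqrt (2*t + c^2) * ∑ j ∈ Finset.univ.erase i, 1 / (z i - z j) :=
            (Finset.mul_sum _ _ _).symm
        _ = 1 / Real.sqrt (2*t + c^2) * z i := by rw [hsum i]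
    show HasDerivWithinAt (fun s => Real.sqrt (2*s + c^2) * z i)
      (∑ j ∈ Finset.univ.erase i,
        1 / (Real.sqrt (2*t + c^2) * z i - Real.sqrt (2*t + c^2) * z j)) (Set.Ici 0) t
    rw [heq]
    exact hmain
end
end

section
/- Let N ≥ 2, let x lie in the interior of C_N^A, and let φ : [0,∞) → ℝ^N be a continuously differentiable function taking values in the interior of C_N^A with φ(0) = x that solves the ODE of type A_{N−1}. Then for all t ≥ 0, ‖φ(t)‖² = N(N−1)·t + ‖x‖², where ‖·‖ is the Euclidean norm on ℝ^N. -/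
open scoped BigOperators

noncomputable section

lemma key_sum {N : ℕ} (y : Fin N → ℝ) (hy : Function.Injective y) :
    ∑ i : Fin N, 2 * y i * ∑ j ∈ Finset.univ.erase i, 1 / (y i - y j)
      = (N : ℝ) * ((N : ℝ) - 1) := by
  classical
  set S : ℝ := ∑ i : Fin N, ∑ j ∈ Finset.univ.erase i, y i / (y i - y j) with hS
  have h1 : ∑ i : Fin N, 2 * y i * ∑ j ∈ Finset.univ.erase i, 1 / (y i - y j) = 2 * S := by
    rw [hS, Finset.mul_sum]
    refine Finset.sum_congr rfl fun i _ => ?_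
    rw [Finset.mul_sum, Finset.mul_sum]
    refine Finset.sum_congr rfl fun j _ => ?_
    ring
  have h2 : S = ∑ i : Fin N, ∑ j ∈ Finset.univ.erase i, y j / (y j - y i) := by
    rw [hS]
    refine Finset.sum_comm' fun i j => ?_
    simp [Finset.mem_erase, ne_comm, and_comm, eq_comm]
  have h3 : S + S = (N : ℝ) * ((N : ℝ) - 1) := by
    nth_rewrite 2 [h2]
    rw [hS, ← Finset.sum_add_distrib]
    have : ∀ i : Fin N, (∑ j ∈ Finset.univ.erase i, y i / (y i - y j))
        + ∑ j ∈ Finset.univ.erase i, y j / (y j - y i) = (N : ℝ) - 1 := by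
      intro i
      rw [← Finset.sum_add_distrib]
      have : ∀ j ∈ Finset.univ.erase i, y i / (y i - y j) + y j / (y j - y i) = 1 := by
        intro j hj
        have hij : y i - y j ≠ 0 := sub_ne_zero.2 fun h =>
          (Finset.mem_erase.1 hj).1 (hy h).symm
        have hji : y j - y i ≠ 0 := fun h => hij (by linarith [sub_eq_zero.1 h])
        field_simp
        ring
      rw [Finset.sum_congr rfl this, Finset.sum_const, Finset.card_erase_of_mem (Finset.mem_univ i)]
      simp [Nat.cast_sub i.pos]
    rw [Finset.sum_congr rfl fun i _ => this i, Finset.sum_const]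
    simp [mul_comm]
  linarith [h1, h3]

/-- Growth of the Euclidean norm along solutions of the ODE of type `A_{N-1}`:
`‖φ(t)‖² = N(N-1)t + ‖x‖²`. -/
theorem statement2 (N : ℕ) (hN : 2 ≤ N) (x : Fin N → ℝ) (hx : interiorA x)
    (φ : ℝ → Fin N → ℝ) (hφ0 : φ 0 = x)
    (hint : ∀ t ∈ Set.Ici (0:ℝ), interiorA (φ t))
    (hode : solvesA φ) :
    ∀ t ∈ Set.Ici (0:ℝ),
      ‖(WithLp.equiv 2 (Fin N → ℝ)).symm (φ t)‖^2
        = N * (N - 1) * t + ‖(WithLp.equiv 2 (Fin N → ℝ)).symm x‖^2 := by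
  classical
  set c : ℝ := (N : ℝ) * ((N : ℝ) - 1) with hc
  set g : ℝ → ℝ := fun s => ∑ i : Fin N, (φ s i) ^ 2 with hg
  -- derivative of g
  have hgderiv : ∀ t ∈ Set.Ici (0:ℝ), HasDerivWithinAt g c (Set.Ici 0) t := by
    intro t ht
    have h1 : HasDerivWithinAt g
        (∑ i : Fin N, 2 * φ t i * ∑ j ∈ Finset.univ.erase i, 1 / (φ t i - φ t j))
        (Set.Ici 0) t := by
      refine HasDerivWithinAt.fun_sum fun i _ => ?_
      have := (hode t ht i).fun_pow 2
      simpa [mul_comm, mul_assoc, mul_left_comm] using this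
    have hinj : Function.Injective (φ t) := (hint t ht).injective
    rwa [key_sum (φ t) hinj] at h1
  -- g t = c * t + g 0 for t ≥ 0
  have hmain : ∀ t ∈ Set.Ici (0:ℝ), g t = c * t + g 0 := by
    intro t ht
    have h0t : (0:ℝ) ≤ t := ht
    have := eq_of_has_deriv_right_eq (f := g) (g := fun s => c * s + g 0)
      (f' := fun _ => c) (a := 0) (b := t)
      (fun s hs => (hgderiv s hs.1).mono (Set.Ici_subset_Ici.2 hs.1))
      (fun s _ => (((hasDerivAt_id s).const_mul c).add_const (g 0)).hasDerivWithinAt.congr_deriv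
        (by simp))
      (fun s hs => ((hgderiv s hs.1).continuousWithinAt).mono
        (fun u hu => hu.1))
      ((continuous_const.mul continuous_id).add continuous_const).continuousOn
      (by simp)
    simpa using this t (Set.mem_Icc.2 ⟨h0t, le_refl t⟩)
  -- norms
  have hnorm : ∀ v : Fin N → ℝ,
      ‖(WithLp.equiv 2 (Fin N → ℝ)).symm v‖^2 = ∑ i : Fin N, (v i) ^ 2 := by
    intro v
    rw [EuclideanSpace.norm_eq]
    rw [Real.sq_sqrt (Finset.sum_nonneg fun i _ => sq_nonneg _)]
    refine Finset.sum_congr rfl fun i _ => ?_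
    rw [WithLp.equiv_symm_apply, PiLp.toLp_apply, Real.norm_eq_abs, sq_abs]
  intro t ht
  rw [hnorm, hnorm, ← hφ0]
  have h := hmain t ht
  simp only [hg, hc] at h ⊢
  linarith [h]
end
end

section
/- Let N ≥ 1 and let A ∈ ℝ^{N×N} be a real symmetric matrix such that E − A has eigenvalues 1, 2, …, N (counted with multiplicity). Then for all c > 0 and t > 0, ∫₀ᵗ exp( ln((2t + c²)/(2s + c²)) · A ) ds = (t + c²/2) · (E − A)⁻¹ · ( E − exp( ln(c²/(2t + c²)) · (E − A) ) ), and this symmetric matrix has eigenvalues λ_k = (1/(2k)) · ((2t + c²)^k − c^{2k}) / (2t + c²)^{k−1} for k = 1,…,N; in particular λ_1 = t. -/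
open scoped BigOperators
open Polynomial

noncomputable section

lemma charmatrix_diag {n : Type*} [Fintype n] [DecidableEq n] (v : n → ℝ) :
    Matrix.charmatrix (Matrix.diagonal v) = Matrix.diagonal (fun i => X - C (v i)) := by
  ext i j
  by_cases h : i = j
  · subst h; simp
  · simp [h, Matrix.diagonal_apply_ne _ h]

lemma charpoly_diag {n : Type*} [Fintype n] [DecidableEq n] (v : n → ℝ) :
    (Matrix.diagonal v).charpoly = ∏ i, (X - C (v i)) := by
  rw [Matrix.charpoly, charmatrix_diag, Matrix.det_diagonal]

lemma charpoly_conj {n : Type*} [Fintype n] [DecidableEq n] (U V M : Matrix n n ℝ)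
    (hUV : U * V = 1) (hVU : V * U = 1) :
    (U * M * V).charpoly = M.charpoly := by
  have hmap : ∀ P Q : Matrix n n ℝ, (P * Q).map (C : ℝ →+* ℝ[X])
      = P.map C * Q.map C := fun P Q => Matrix.map_mul
  have h1 : (1 : Matrix n n ℝ).map (C : ℝ →+* ℝ[X]) = 1 := Matrix.map_one _ (map_zero C) (map_one C)
  have hc : Matrix.charmatrix (U * M * V) = U.map C * Matrix.charmatrix M * V.map C := by
    rw [Matrix.charmatrix, Matrix.charmatrix]
    simp only [RingHom.mapMatrix_apply]
    rw [Matrix.mul_sub, Matrix.sub_mul, hmap, hmap]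
    congr 1
    refine Eq.symm ?_
    calc U.map (C : ℝ →+* ℝ[X]) * Matrix.scalar n (X : ℝ[X]) * V.map C
        = Matrix.scalar n (X : ℝ[X]) * (U.map C * V.map C) := by
          rw [← (Matrix.scalar_commute (X : ℝ[X]) (fun r => Commute.all _ _) (U.map C)).eq,
            Matrix.mul_assoc]
      _ = Matrix.scalar n (X : ℝ[X]) := by rw [← hmap, hUV, h1, mul_one]
  rw [Matrix.charpoly, Matrix.charpoly, hc, Matrix.det_mul, Matrix.det_mul]
  have h2 : (U.map (C : ℝ →+* ℝ[X])).det * (V.map C).det = 1 := by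
    rw [← Matrix.det_mul, ← hmap, hUV, h1, Matrix.det_one]
  calc (U.map (C : ℝ →+* ℝ[X])).det * (Matrix.charmatrix M).det * (V.map C).det
      = (U.map (C : ℝ →+* ℝ[X])).det * (V.map C).det * (Matrix.charmatrix M).det := by ring
    _ = (Matrix.charmatrix M).det := by rw [h2, one_mul]

lemma poly_int (c t : ℝ) (k : ℕ) :
    ∫ s in (0:ℝ)..t, (2*s + c^2)^k
      = ((2*t + c^2)^(k+1) - (c^2)^(k+1)) / (2*(k+1)) := by
  have h : ∀ s ∈ Set.uIcc (0:ℝ) t, HasDerivAt (fun s : ℝ => (2*s + c^2)^(k+1) / (2*(k+1)))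
      ((2*s + c^2)^k) s := by
    intro s _
    have h1 : HasDerivAt (fun s : ℝ => 2*s + c^2) 2 s := by
      simpa using ((hasDerivAt_id s).const_mul 2).add_const (c^2)
    have h2 := (h1.pow (k+1)).div_const (2*(k+1))
    refine h2.congr_deriv ?_
    have hk : (2*((k:ℝ)+1)) ≠ 0 := by positivity
    rw [div_eq_iff hk]; simp only [Nat.add_sub_cancel, Nat.cast_add, Nat.cast_one]; ring
  have hint : IntervalIntegrable (fun s : ℝ => (2*s + c^2)^k) MeasureTheory.volume 0 t :=
    (Continuous.intervalIntegrable (by continuity) 0 t)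
  rw [intervalIntegral.integral_eq_sub_of_hasDerivAt h hint]
  field_simp
  ring

lemma scalar_int (c t : ℝ) (hc : 0 < c) (ht : 0 < t) (k : ℕ) :
    ∫ s in (0:ℝ)..t, Real.exp (Real.log ((2*t + c^2)/(2*s + c^2)) * (-(k:ℝ)))
      = (t + c^2/2) * ((((k:ℝ)+1))⁻¹
          * (1 - Real.exp (Real.log (c^2/(2*t + c^2)) * ((k:ℝ)+1)))) := by
  have hc2 : 0 < c^2 := by positivity
  have htc : 0 < 2*t + c^2 := by positivity
  have hcong : ∀ s ∈ Set.uIcc (0:ℝ) t,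
      Real.exp (Real.log ((2*t + c^2)/(2*s + c^2)) * (-(k:ℝ)))
        = (2*s + c^2)^k / (2*t + c^2)^k := by
    intro s hs
    rw [Set.uIcc_of_le ht.le] at hs
    have hsc : 0 < 2*s + c^2 := by nlinarith [hs.1]
    have hx : 0 < (2*t + c^2)/(2*s + c^2) := div_pos htc hsc
    rw [← Real.rpow_def_of_pos hx, Real.rpow_neg hx.le, Real.rpow_natCast, div_pow,
      inv_div]
  rw [intervalIntegral.integral_congr hcong]
  have hdm : ∀ s : ℝ, (2*s + c^2)^k / (2*t + c^2)^k = (2*s + c^2)^k * ((2*t + c^2)^k)⁻¹ := by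
    intro s; rw [div_eq_mul_inv]
  simp only [hdm]
  rw [intervalIntegral.integral_mul_const, poly_int c t k]
  have hr : Real.exp (Real.log (c^2/(2*t + c^2)) * ((k:ℝ)+1))
      = (c^2)^(k+1) / (2*t + c^2)^(k+1) := by
    have hx : 0 < c^2/(2*t + c^2) := div_pos hc2 htc
    rw [← Real.rpow_def_of_pos hx]
    rw [show ((k:ℝ)+1) = ((k+1 : ℕ) : ℝ) by push_cast; ring, Real.rpow_natCast, div_pow]
  rw [hr]
  have h1 : ((k:ℝ)+1) ≠ 0 := by positivity
  have h2 : (2*t + c^2)^(k+1) ≠ 0 := by positivity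
  have h3 : (2*t + c^2)^k ≠ 0 := by positivity
  field_simp
  ring


/-- For a real symmetric `N×N` matrix `A` such that `E - A` has eigenvalues
`1, 2, …, N` (counted with multiplicity, expressed via the characteristic
polynomial), the entrywise integral
`∫₀ᵗ exp(ln((2t+c²)/(2s+c²))·A) ds` equals
`(t + c²/2)·(E-A)⁻¹·(E - exp(ln(c²/(2t+c²))·(E-A)))`, and the latter symmetric
matrix has eigenvalues `λ_k = (1/(2k))·((2t+c²)^k - c^{2k})/(2t+c²)^{k-1}`,
`k = 1,…,N`; in particular `λ_1 = t`. -/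
theorem statement6 (N : ℕ) (hN : 1 ≤ N) (A : Matrix (Fin N) (Fin N) ℝ)
    (hsymm : A.IsSymm)
    (heig : (1 - A).charpoly
      = ∏ k ∈ Finset.range N, (X - C ((k : ℝ) + 1))) (c t : ℝ) (hc : 0 < c) (ht : 0 < t) :
    (Matrix.of fun i j =>
        ∫ s in (0:ℝ)..t,
          (NormedSpace.exp (Real.log ((2*t + c^2)/(2*s + c^2)) • A)) i j)
      = (t + c^2/2) •
        ((1 - A)⁻¹ *
          (1 - NormedSpace.exp (Real.log (c^2/(2*t + c^2)) • (1 - A)))) ∧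
    ((t + c^2/2) •
        ((1 - A)⁻¹ *
          (1 - NormedSpace.exp (Real.log (c^2/(2*t + c^2)) • (1 - A))))).IsSymm ∧
    ((t + c^2/2) •
        ((1 - A)⁻¹ *
          (1 - NormedSpace.exp (Real.log (c^2/(2*t + c^2)) • (1 - A))))).charpoly
      = ∏ k ∈ Finset.range N,
          (X - C ((1/(2*((k:ℝ)+1))) * ((2*t + c^2)^(k+1) - c^(2*(k+1))) / (2*t + c^2)^k)) ∧
    (1/(2*(1:ℝ))) * ((2*t + c^2)^1 - c^(2*1)) / (2*t + c^2)^(0:ℕ) = t := by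
  classical
  have hA : A.IsHermitian := by
    rwa [Matrix.IsHermitian, Matrix.conjTranspose_eq_transpose_of_trivial]
  set ρ : ℝ := Real.log (c^2/(2*t + c^2)) with hρ
  set U : Matrix (Fin N) (Fin N) ℝ := (hA.eigenvectorUnitary : Matrix (Fin N) (Fin N) ℝ)
    with hUdef
  set V : Matrix (Fin N) (Fin N) ℝ := star U with hVdef
  have hUV : U * V = 1 := (Matrix.mem_unitaryGroup_iff).mp hA.eigenvectorUnitary.2
  have hVU : V * U = 1 := (Matrix.mem_unitaryGroup_iff').mp hA.eigenvectorUnitary.2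
  set μ : Fin N → ℝ := hA.eigenvalues with hμ
  have hspec : A = U * Matrix.diagonal μ * V := by
    have h := hA.spectral_theorem
    simpa [hUdef, hVdef, hμ, Function.comp] using h
  -- conjugation helpers
  have hconj_mul : ∀ v w : Fin N → ℝ,
      (U * Matrix.diagonal v * V) * (U * Matrix.diagonal w * V)
        = U * Matrix.diagonal (fun i => v i * w i) * V := by
    intro v w
    calc (U * Matrix.diagonal v * V) * (U * Matrix.diagonal w * V)
        = U * (Matrix.diagonal v * ((V * U) * (Matrix.diagonal w * V))) := by
          simp only [Matrix.mul_assoc]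
      _ = U * (Matrix.diagonal v * Matrix.diagonal w) * V := by
          rw [hVU, one_mul, Matrix.mul_assoc, Matrix.mul_assoc]
      _ = U * Matrix.diagonal (fun i => v i * w i) * V := by
          rw [Matrix.diagonal_mul_diagonal]
  have hconj_one : U * Matrix.diagonal (fun _ : Fin N => (1:ℝ)) * V = 1 := by
    rw [Matrix.diagonal_one, mul_one, hUV]
  have hconj_sub : ∀ v w : Fin N → ℝ,
      U * Matrix.diagonal v * V - U * Matrix.diagonal w * V
        = U * Matrix.diagonal (fun i => v i - w i) * V := by
    intro v w
    rw [← Matrix.sub_mul, ← Matrix.mul_sub, ← Matrix.diagonal_sub]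
  have hconj_smul : ∀ (r : ℝ) (v : Fin N → ℝ),
      r • (U * Matrix.diagonal v * V) = U * Matrix.diagonal (fun i => r * v i) * V := by
    intro r v
    rw [show (Matrix.diagonal fun i => r * v i) = r • Matrix.diagonal v from Matrix.diagonal_smul r v]
    simp [Matrix.mul_smul, Matrix.smul_mul]
  have h1A : 1 - A = U * Matrix.diagonal (fun i => 1 - μ i) * V := by
    conv_lhs => rw [hspec, ← hconj_one]
    rw [hconj_sub]
  -- eigenvalue multiset
  have hcp1 : (1 - A).charpoly = ∏ i, (X - C (1 - μ i)) := by
    rw [h1A, charpoly_conj _ _ _ hUV hVU, charpoly_diag]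
  have hms : Multiset.map (fun i => 1 - μ i) Finset.univ.val
      = Multiset.map (fun k : ℕ => (k:ℝ)+1) (Finset.range N).val := by
    have h2 : (∏ i, (X - C (1 - μ i))) = ∏ k ∈ Finset.range N, (X - C ((k : ℝ) + 1)) :=
      hcp1.symm.trans heig
    have e1 : (∏ i, (X - C (1 - μ i)))
        = (Multiset.map (fun a : ℝ => X - C a)
            (Multiset.map (fun i => 1 - μ i) Finset.univ.val)).prod := by
      rw [Finset.prod_eq_multiset_prod, Multiset.map_map]; rfl
    have e2 : (∏ k ∈ Finset.range N, (X - C ((k : ℝ) + 1)))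
        = (Multiset.map (fun a : ℝ => X - C a)
            (Multiset.map (fun k : ℕ => (k:ℝ)+1) (Finset.range N).val)).prod := by
      rw [Finset.prod_eq_multiset_prod, Multiset.map_map]; rfl
    have h3 := congrArg Polynomial.roots (e1 ▸ e2 ▸ h2)
    rwa [Polynomial.roots_multiset_prod_X_sub_C, Polynomial.roots_multiset_prod_X_sub_C] at h3
  have hb : ∀ i, ∃ k : ℕ, k < N ∧ 1 - μ i = (k:ℝ)+1 := by
    intro i
    have : (1 - μ i) ∈ Multiset.map (fun k : ℕ => (k:ℝ)+1) (Finset.range N).val := by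
      rw [← hms]
      exact Multiset.mem_map_of_mem _ (Finset.mem_univ_val i)
    obtain ⟨k, hk, he⟩ := Multiset.mem_map.mp this
    exact ⟨k, Finset.mem_range.mp hk, he.symm⟩
  have hbne : ∀ i, 1 - μ i ≠ 0 := by
    intro i
    obtain ⟨k, _, he⟩ := hb i
    rw [he]; positivity
  set w : Fin N → ℝ :=
    fun i => (t + c^2/2) * ((1 - μ i)⁻¹ * (1 - Real.exp (ρ * (1 - μ i)))) with hw
  have hinv : (1 - A)⁻¹ = U * Matrix.diagonal (fun i => (1 - μ i)⁻¹) * V := by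
    apply Matrix.inv_eq_right_inv
    rw [h1A, hconj_mul]
    have he : (fun i => (1 - μ i) * (1 - μ i)⁻¹) = fun _ : Fin N => (1:ℝ) :=
      funext fun i => mul_inv_cancel₀ (hbne i)
    rw [he, hconj_one]
  have hexpconj : ∀ d : Fin N → ℝ, NormedSpace.exp (U * Matrix.diagonal d * V)
      = U * Matrix.diagonal (fun i => Real.exp (d i)) * V := by
    intro d
    let u : (Matrix (Fin N) (Fin N) ℝ)ˣ := ⟨U, V, hUV, hVU⟩
    have h := Matrix.exp_units_conj u (Matrix.diagonal d)
    have hu : (u : Matrix (Fin N) (Fin N) ℝ) = U := rfl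
    have hu' : ((u⁻¹ : (Matrix (Fin N) (Fin N) ℝ)ˣ) : Matrix (Fin N) (Fin N) ℝ) = V := rfl
    rw [hu, hu'] at h
    rw [h, Matrix.exp_diagonal]
    congr 1
    rw [Pi.exp_def]
    funext i
    rw [Real.exp_eq_exp_ℝ]
  have hexp_smul : ∀ (r : ℝ) (d : Fin N → ℝ),
      NormedSpace.exp (r • (U * Matrix.diagonal d * V))
        = U * Matrix.diagonal (fun i => Real.exp (r * d i)) * V := by
    intro r d
    rw [hconj_smul, hexpconj]
  have hRHS : (t + c^2/2) • ((1 - A)⁻¹ * (1 - NormedSpace.exp (ρ • (1 - A))))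
      = U * Matrix.diagonal w * V := by
    rw [hinv, h1A, hexp_smul, ← hconj_one, hconj_sub, hconj_mul, hconj_smul]
  have htc : 0 < 2*t + c^2 := by positivity
  have hcont : ∀ a : ℝ, ContinuousOn
      (fun s : ℝ => Real.exp (Real.log ((2*t + c^2)/(2*s + c^2)) * a)) (Set.uIcc 0 t) := by
    intro a
    apply Real.continuous_exp.comp_continuousOn
    apply ContinuousOn.mul _ continuousOn_const
    apply ContinuousOn.log
    · exact ContinuousOn.div continuousOn_const
        (Continuous.continuousOn ((continuous_const.mul continuous_id).add continuous_const))
        (fun s hs => by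
          rw [Set.uIcc_of_le ht.le] at hs
          nlinarith [hs.1, sq_nonneg c])
    · intro s hs
      rw [Set.uIcc_of_le ht.le] at hs
      have h1 : 0 < 2*s + c^2 := by nlinarith [hs.1]
      positivity
  have hexpA : ∀ r : ℝ, NormedSpace.exp (r • A)
      = U * Matrix.diagonal (fun m => Real.exp (r * μ m)) * V := by
    intro r; rw [hspec, hexp_smul]
  have hentry : ∀ (d : Fin N → ℝ) (i j : Fin N),
      (U * Matrix.diagonal d * V) i j = ∑ m, U i m * d m * V m j := by
    intro d i j
    rw [Matrix.mul_apply]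
    simp [Matrix.mul_diagonal]
  have hLHS : (Matrix.of fun i j => ∫ s in (0:ℝ)..t,
        (NormedSpace.exp (Real.log ((2*t + c^2)/(2*s + c^2)) • A)) i j)
      = U * Matrix.diagonal w * V := by
    ext i j
    rw [Matrix.of_apply, hentry w i j]
    calc ∫ s in (0:ℝ)..t, (NormedSpace.exp (Real.log ((2*t + c^2)/(2*s + c^2)) • A)) i j
        = ∫ s in (0:ℝ)..t, ∑ m, U i m
            * Real.exp (Real.log ((2*t + c^2)/(2*s + c^2)) * μ m) * V m j := by
          apply intervalIntegral.integral_congr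
          intro s _
          beta_reduce
          rw [hexpA, hentry]
      _ = ∑ m, ∫ s in (0:ℝ)..t, U i m
            * Real.exp (Real.log ((2*t + c^2)/(2*s + c^2)) * μ m) * V m j := by
          apply intervalIntegral.integral_finset_sum
          intro m _
          exact ((continuousOn_const.mul (hcont (μ m))).mul
            continuousOn_const).intervalIntegrable
      _ = ∑ m, U i m * w m * V m j := by
          apply Finset.sum_congr rfl
          intro m _
          obtain ⟨k, hk, he⟩ := hb m
          have hμm : μ m = -(k:ℝ) := by linarith
          have h1 : ∀ s : ℝ, U i m * Real.exp (Real.log ((2*t + c^2)/(2*s + c^2)) * μ m) * V m j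
              = (U i m * V m j)
                * Real.exp (Real.log ((2*t + c^2)/(2*s + c^2)) * (-(k:ℝ))) := by
            intro s; rw [hμm]; ring
          simp only [h1]
          rw [intervalIntegral.integral_const_mul, scalar_int c t hc ht k]
          simp only [hw]
          rw [he, hρ]
          ring
  have hval : ∀ k : ℕ,
      (t + c^2/2) * ((((k:ℝ)+1))⁻¹ * (1 - Real.exp (ρ * ((k:ℝ)+1))))
        = (1/(2*((k:ℝ)+1))) * ((2*t + c^2)^(k+1) - c^(2*(k+1))) / (2*t + c^2)^k := by
    intro k
    have hc2 : 0 < c^2 := by positivity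
    have hr : Real.exp (ρ * ((k:ℝ)+1)) = (c^2)^(k+1) / (2*t + c^2)^(k+1) := by
      have hx : 0 < c^2/(2*t + c^2) := div_pos hc2 htc
      rw [hρ, ← Real.rpow_def_of_pos hx,
        show ((k:ℝ)+1) = ((k+1 : ℕ) : ℝ) by push_cast; ring, Real.rpow_natCast, div_pow]
    rw [hr, show c^(2*(k+1)) = (c^2)^(k+1) by rw [pow_mul]]
    have h1 : ((k:ℝ)+1) ≠ 0 := by positivity
    have h2 : (2*t + c^2)^(k+1) ≠ 0 := by positivity
    have h3 : (2*t + c^2)^k ≠ 0 := by positivity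
    field_simp
    ring
  refine ⟨hLHS.trans hRHS.symm, ?_, ?_, ?_⟩
  · rw [hRHS]
    have hVT : V = U.transpose := by
      rw [hVdef]; ext i j; simp [Matrix.star_apply]
    have hts : (U * Matrix.diagonal w * V).transpose = U * Matrix.diagonal w * V := by
      rw [hVT, Matrix.transpose_mul, Matrix.transpose_mul, Matrix.transpose_transpose,
        Matrix.diagonal_transpose, ← Matrix.mul_assoc]
    exact hts
  · rw [hRHS, charpoly_conj _ _ _ hUV hVU, charpoly_diag]
    have e1 : (∏ i, (X - C (w i)))
        = (Multiset.map
            (fun a : ℝ => X - C ((t + c^2/2) * (a⁻¹ * (1 - Real.exp (ρ * a)))))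
            (Multiset.map (fun i => 1 - μ i) Finset.univ.val)).prod := by
      rw [Finset.prod_eq_multiset_prod, Multiset.map_map]
      rfl
    rw [e1, hms, Multiset.map_map, ← Finset.prod_eq_multiset_prod]
    apply Finset.prod_congr rfl
    intro k _
    have := hval k
    simp only [Function.comp]
    rw [this]
  · rw [pow_zero, pow_one]
    norm_num
    ring
end
end

section
/- Let N ≥ 2 and let z_1 > z_2 > … > z_N be real numbers that are precisely the zeros of the N-th physicists' Hermite polynomial H_N. Define the symmetric matrix A ∈ ℝ^{N×N} by A_{ij} := 1/(z_i − z_j)² for i ≠ j and A_{ii} := −∑_{j≠i} 1/(z_i − z_j)². Then the matrix E − A has eigenvalues 1, 2, …, N (counted with multiplicity). -/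
open scoped BigOperators
open Polynomial

noncomputable section

namespace Statement7Aux

open Finset

/-! ### The physicists' Hermite polynomials as actual polynomials -/

def HP : ℕ → ℝ[X]
  | 0 => 1
  | (n+1) => C 2 * X * HP n - derivative (HP n)

lemma HP_succ (n : ℕ) : HP (n+1) = C 2 * X * HP n - derivative (HP n) := rfl

lemma iteratedDeriv_gauss (n : ℕ) :
    iteratedDeriv n (fun y => Real.exp (-y^2))
      = fun x => ((-1:ℝ)^n * (HP n).eval x) * Real.exp (-x^2) := by
  induction n with
  | zero => funext x; simp [HP]
  | succ n ih =>
    funext x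
    rw [iteratedDeriv_succ, ih]
    have he : HasDerivAt (fun x : ℝ => Real.exp (-x^2)) (Real.exp (-x^2) * (-(2*x))) x := by
      have h2 : HasDerivAt (fun x : ℝ => -x^2) (-(2*x)) x := by
        have h := (hasDerivAt_pow 2 x).neg; simp at h; exact h
      simpa using h2.exp
    have hp : HasDerivAt (fun x : ℝ => (-1:ℝ)^n * (HP n).eval x)
        ((-1:ℝ)^n * (derivative (HP n)).eval x) x :=
      ((HP n).hasDerivAt x).const_mul _
    have h1 := hp.mul he
    rw [show (fun x : ℝ => (-1:ℝ)^n * (HP n).eval x * Real.exp (-x^2)) = ((fun x : ℝ => (-1:ℝ)^n * (HP n).eval x) * fun x => Real.exp (-x^2)) from rfl, h1.deriv]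
    show _ = ((-1:ℝ)^(n+1) * (C 2 * X * HP n - derivative (HP n)).eval x) * Real.exp (-x^2)
    simp only [eval_sub, eval_mul, eval_C, eval_X, pow_succ]
    ring

lemma physHermite_eq (n : ℕ) (x : ℝ) : physHermite n x = (HP n).eval x := by
  unfold physHermite
  rw [iteratedDeriv_gauss]
  have h1 : Real.exp (x^2) * Real.exp (-x^2) = 1 := by
    rw [← Real.exp_add]; simp
  have h2 : ((-1:ℝ)^n) * ((-1:ℝ)^n) = 1 := by
    rw [← pow_add]; simp [pow_mul, ← two_mul]
  calc (-1 : ℝ)^n * Real.exp (x^2) * (((-1:ℝ)^n * (HP n).eval x) * Real.exp (-x^2))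
      = (((-1:ℝ)^n) * ((-1:ℝ)^n)) * (Real.exp (x^2) * Real.exp (-x^2)) * (HP n).eval x := by ring
    _ = (HP n).eval x := by rw [h1, h2]; ring

lemma HP_deg_coeff (n : ℕ) : (HP n).natDegree = n ∧ (HP n).coeff n = 2^n := by
  induction n with
  | zero => simp [HP]
  | succ n ih =>
    obtain ⟨hd, hc⟩ := ih
    have hne : HP n ≠ 0 := by
      intro h
      rw [h] at hc
      simp at hc
      exact (pow_ne_zero n (two_ne_zero)) hc.symm
    have hXd : (C (2:ℝ) * X * HP n).natDegree = n + 1 := by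
      rw [mul_assoc, natDegree_C_mul (two_ne_zero), natDegree_X_mul hne, hd]
    have hder : (derivative (HP n)).natDegree < n + 1 :=
      lt_of_le_of_lt (natDegree_derivative_le _) (by omega)
    have hcoeff : (HP (n+1)).coeff (n+1) = 2^(n+1) := by
      rw [HP_succ, coeff_sub, coeff_eq_zero_of_natDegree_lt hder, mul_assoc, coeff_C_mul,
        coeff_X_mul, hc]
      ring
    constructor
    · refine le_antisymm ?_ (le_natDegree_of_ne_zero (by rw [hcoeff]; positivity))
      rw [HP_succ]
      refine natDegree_sub_le_iff_left ?_ |>.mpr (le_of_eq hXd)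
      omega
    · exact hcoeff

lemma HP_derivative (n : ℕ) : derivative (HP (n+1)) = C (2*(n+1) : ℝ) * HP n := by
  induction n with
  | zero => rw [HP_succ]; simp [HP]
  | succ n ih =>
    rw [HP_succ (n+1), derivative_sub, derivative_mul, derivative_mul, derivative_C,
      derivative_X, ih, derivative_mul, derivative_C]
    rw [show HP (n+1) = C 2 * X * HP n - derivative (HP n) from rfl] at *
    push_cast
    rw [show C (2*((n:ℝ)+1+1)) = C (2*((n:ℝ)+1)) + C 2 by rw [← C_add]; congr 1; ring]
    ring

lemma HP_ode (n : ℕ) :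
    derivative (derivative (HP n)) = C 2 * X * derivative (HP n) - C (2*n : ℝ) * HP n := by
  cases n with
  | zero => simp [HP]
  | succ n =>
    rw [HP_derivative, derivative_mul, derivative_C]
    cases n with
    | zero => simp [HP]; ring
    | succ m =>
      rw [HP_succ (m+1), HP_derivative]
      push_cast
      ring

/-! ### Evaluations of derivatives of the nodal polynomial -/

variable {N : ℕ} (z : Fin N → ℝ)

lemma eval_d_nodal (i : Fin N) :
    eval (z i) (derivative (Lagrange.nodal univ z)) = ∏ j ∈ univ.erase i, (z i - z j) := by
  rw [Lagrange.eval_nodal_derivative_eval_node_eq (mem_univ i), Lagrange.eval_nodal]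

lemma eval_dd_nodal (i : Fin N) :
    eval (z i) (derivative (derivative (Lagrange.nodal univ z)))
      = 2 * ∑ j ∈ univ.erase i, ∏ m ∈ (univ.erase i).erase j, (z i - z m) := by
  rw [Lagrange.derivative_nodal]
  rw [map_sum, eval_finset_sum]
  have hterm : ∀ a : Fin N, eval (z i) (derivative (Lagrange.nodal (univ.erase a) z))
      = ∑ b ∈ (univ.erase a), eval (z i) (Lagrange.nodal ((univ.erase a).erase b) z) := by
    intro a
    rw [Lagrange.derivative_nodal, eval_finset_sum]
  have hsplit := Finset.add_sum_erase univ
    (fun a => eval (z i) (derivative (Lagrange.nodal (univ.erase a) z))) (mem_univ i)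
  rw [← hsplit]
  rw [hterm i]
  have h2 : ∀ a ∈ univ.erase i, eval (z i) (derivative (Lagrange.nodal (univ.erase a) z))
      = ∏ m ∈ (univ.erase i).erase a, (z i - z m) := by
    intro a ha
    have hai : a ≠ i := (mem_erase.mp ha).1
    rw [hterm a]
    have hib : i ∈ univ.erase a := mem_erase.mpr ⟨Ne.symm hai, mem_univ i⟩
    rw [Finset.sum_eq_single i]
    · rw [Finset.erase_right_comm, Lagrange.eval_nodal]
    · intro b hb hbi
      exact Lagrange.eval_nodal_at_node
        (mem_erase.mpr ⟨Ne.symm hbi, mem_erase.mpr ⟨Ne.symm hai, mem_univ i⟩⟩)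
    · intro h; exact absurd hib h
  rw [Finset.sum_congr rfl h2]
  have : ∀ b ∈ univ.erase i, eval (z i) (Lagrange.nodal ((univ.erase i).erase b) z)
      = ∏ m ∈ (univ.erase i).erase b, (z i - z m) := fun b _ => Lagrange.eval_nodal
  rw [Finset.sum_congr rfl this]
  ring

lemma stieltjes (hzinj : Function.Injective z)
    (hode : ∀ i, eval (z i) (derivative (derivative (Lagrange.nodal univ z)))
        = 2 * z i * eval (z i) (derivative (Lagrange.nodal univ z)))
    (i : Fin N) : ∑ j ∈ univ.erase i, (z i - z j)⁻¹ = z i := by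
  classical
  have hne : ∀ j ∈ univ.erase i, z i - z j ≠ 0 := fun j hj =>
    sub_ne_zero.mpr (fun h => (mem_erase.mp hj).1 (hzinj h).symm)
  have hw : (∏ j ∈ univ.erase i, (z i - z j)) ≠ 0 := prod_ne_zero_iff.mpr hne
  have key : ∑ j ∈ univ.erase i, ∏ m ∈ (univ.erase i).erase j, (z i - z m)
      = z i * ∏ j ∈ univ.erase i, (z i - z j) := by
    have h := hode i
    rw [eval_dd_nodal, eval_d_nodal] at h
    linarith
  calc ∑ j ∈ univ.erase i, (z i - z j)⁻¹
      = ∑ j ∈ univ.erase i, (∏ m ∈ (univ.erase i).erase j, (z i - z m))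
          / (∏ j ∈ univ.erase i, (z i - z j)) := by
        refine Finset.sum_congr rfl fun j hj => ?_
        have hm : (z i - z j) * ∏ m ∈ (univ.erase i).erase j, (z i - z m)
            = ∏ m ∈ univ.erase i, (z i - z m) :=
          Finset.mul_prod_erase _ (fun m => z i - z m) hj
        have hu : (∏ m ∈ (univ.erase i).erase j, (z i - z m)) ≠ 0 :=
          prod_ne_zero_iff.mpr (fun m hm' => hne m (mem_of_mem_erase hm'))
        rw [← hm, mul_comm, div_mul_eq_div_div, div_self hu, one_div]
    _ = z i := by
        rw [← Finset.sum_div, key, mul_div_assoc, div_self hw, mul_one]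

/-! ### The triangularizing polynomials -/

def gpoly (z : Fin N → ℝ) (k : ℕ) : ℝ[X] :=
  C (-(k:ℝ)) * X^k + ∑ t ∈ range k, ∑ u ∈ range t,
    (C (∑ j, z j ^ (t-1-u)) * X^(k-1-t+u) - X^(k-2))

lemma gpoly_coeff_eq_zero (z : Fin N → ℝ) (k m : ℕ) (h : k < m) :
    (gpoly z k).coeff m = 0 := by
  simp only [gpoly, coeff_add, coeff_C_mul, coeff_X_pow, finset_sum_coeff, coeff_sub]
  rw [if_neg (by omega), Finset.sum_eq_zero, mul_zero, add_zero]
  intro t ht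
  rw [Finset.sum_eq_zero]
  intro u hu
  simp only [mem_range] at ht hu
  rw [if_neg (by omega), if_neg (by omega)]
  simp

lemma gpoly_coeff_self (z : Fin N → ℝ) (k : ℕ) :
    (gpoly z k).coeff k = -(k:ℝ) := by
  simp only [gpoly, coeff_add, coeff_C_mul, coeff_X_pow, finset_sum_coeff, coeff_sub]
  rw [if_pos trivial, Finset.sum_eq_zero, mul_one, add_zero]
  intro t ht
  rw [Finset.sum_eq_zero]
  intro u hu
  simp only [mem_range] at ht hu
  rw [if_neg (by omega), if_neg (by omega)]
  simp

lemma gpoly_natDegree_le (z : Fin N → ℝ) (k : ℕ) : (gpoly z k).natDegree ≤ k := by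
  refine natDegree_le_iff_coeff_eq_zero.mpr fun m hm => gpoly_coeff_eq_zero z k m hm

lemma key_identity (hzinj : Function.Injective z)
    (hstil : ∀ i, ∑ j ∈ univ.erase i, (z i - z j)⁻¹ = z i)
    (A : Matrix (Fin N) (Fin N) ℝ)
    (hA : ∀ i j : Fin N, A i j =
      if i = j then -∑ l ∈ Finset.univ.erase i, 1/(z i - z l)^2
      else 1/(z i - z j)^2)
    (i : Fin N) (k : ℕ) :
    ∑ j, A i j * z j ^ k = eval (z i) (gpoly z k) := by
  classical
  have hne : ∀ j ∈ univ.erase i, z i - z j ≠ 0 := fun j hj =>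
    sub_ne_zero.mpr (fun h => (Finset.mem_erase.mp hj).1 (hzinj h).symm)
  -- Step 0
  have h0 : ∑ j, A i j * z j ^ k
      = ∑ j ∈ univ.erase i, (z j ^ k - z i ^ k) / (z i - z j)^2 := by
    rw [← Finset.add_sum_erase _ _ (mem_univ i), hA i i, if_pos rfl]
    have hrest : ∀ j ∈ univ.erase i, A i j * z j ^ k = 1/(z i - z j)^2 * z j ^ k := fun j hj => by
      rw [hA i j, if_neg (fun h => (Finset.mem_erase.mp hj).1 h.symm)]
    rw [Finset.sum_congr rfl hrest]
    have hr2 : ∑ j ∈ univ.erase i, (z j ^ k - z i ^ k) / (z i - z j)^2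
        = ∑ j ∈ univ.erase i, (1/(z i - z j)^2 * z j ^ k - 1/(z i - z j)^2 * z i ^ k) :=
      Finset.sum_congr rfl fun j hj => by ring
    rw [hr2, Finset.sum_sub_distrib, ← Finset.sum_mul]
    ring
  -- Step 1
  have h1 : ∀ j ∈ univ.erase i, (z j ^ k - z i ^ k) / (z i - z j)^2
      = ∑ t ∈ range k, (-(z i ^ (k-1-t) * (z j ^ t * (z i - z j)⁻¹))) := by
    intro j hj
    have hd := hne j hj
    have hgeom := geom_sum₂_mul (z j) (z i) k
    rw [← hgeom, div_eq_iff (pow_ne_zero 2 hd), Finset.sum_mul, Finset.sum_mul]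
    refine Finset.sum_congr rfl fun t ht => ?_
    field_simp
    ring
  -- Step 2
  have hs : ∀ t : ℕ, ∑ j ∈ univ.erase i, z j ^ t * (z i - z j)⁻¹
      = z i ^ (t+1) - ∑ u ∈ range t, ((∑ j, z j ^ (t-1-u)) * z i ^ u - z i ^ (t-1)) := by
    intro t
    have hper : ∀ j ∈ univ.erase i, z j ^ t * (z i - z j)⁻¹
        = z i ^ t * (z i - z j)⁻¹ - ∑ u ∈ range t, z i ^ u * z j ^ (t-1-u) := by
      intro j hj
      have hd := hne j hj
      have hgeom := geom_sum₂_mul (z i) (z j) t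
      have hz : z j ^ t = z i ^ t - (∑ u ∈ range t, z i ^ u * z j ^ (t-1-u)) * (z i - z j) := by
        linarith [hgeom]
      rw [hz]
      field_simp
    rw [Finset.sum_congr rfl hper, Finset.sum_sub_distrib, ← Finset.mul_sum, hstil i]
    have hswap : ∑ j ∈ univ.erase i, ∑ u ∈ range t, z i ^ u * z j ^ (t-1-u)
        = ∑ u ∈ range t, ((∑ j, z j ^ (t-1-u)) * z i ^ u - z i ^ (t-1)) := by
      rw [Finset.sum_comm]
      refine Finset.sum_congr rfl fun u hu => ?_
      rw [← Finset.mul_sum]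
      have herase : ∑ j ∈ univ.erase i, z j ^ (t-1-u)
          = (∑ j, z j ^ (t-1-u)) - z i ^ (t-1-u) := by
        have := Finset.add_sum_erase univ (fun j => z j ^ (t-1-u)) (mem_univ i)
        linarith
      rw [herase]
      have hexp : z i ^ u * z i ^ (t-1-u) = z i ^ (t-1) := by
        rw [← pow_add]
        congr 1
        simp only [mem_range] at hu
        omega
      rw [mul_sub, hexp]
      ring
    rw [hswap, pow_succ]
  -- Step 3: assemble
  rw [h0, Finset.sum_congr rfl h1, Finset.sum_comm]
  have h2 : ∀ t ∈ range k,
      ∑ j ∈ univ.erase i, (-(z i ^ (k-1-t) * (z j ^ t * (z i - z j)⁻¹)))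
      = -(z i ^ (k-1-t) * (z i ^ (t+1)
          - ∑ u ∈ range t, ((∑ j, z j ^ (t-1-u)) * z i ^ u - z i ^ (t-1)))) := by
    intro t ht
    rw [Finset.sum_neg_distrib, ← Finset.mul_sum, hs t]
  rw [Finset.sum_congr rfl h2]
  have heval : eval (z i) (gpoly z k)
      = -(k:ℝ) * z i ^ k + ∑ t ∈ range k, ∑ u ∈ range t,
          ((∑ j, z j ^ (t-1-u)) * z i ^ (k-1-t+u) - z i ^ (k-2)) := by
    simp [gpoly, eval_finset_sum]
  rw [heval]
  have h3 : ∀ t ∈ range k,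
      -(z i ^ (k-1-t) * (z i ^ (t+1)
          - ∑ u ∈ range t, ((∑ j, z j ^ (t-1-u)) * z i ^ u - z i ^ (t-1))))
      = -(z i ^ k) + ∑ u ∈ range t,
          ((∑ j, z j ^ (t-1-u)) * z i ^ (k-1-t+u) - z i ^ (k-2)) := by
    intro t ht
    simp only [mem_range] at ht
    have e1 : z i ^ (k-1-t) * z i ^ (t+1) = z i ^ k := by
      rw [← pow_add]; congr 1; omega
    have e2 : ∀ u ∈ range t, z i ^ (k-1-t) * ((∑ j, z j ^ (t-1-u)) * z i ^ u - z i ^ (t-1))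
        = (∑ j, z j ^ (t-1-u)) * z i ^ (k-1-t+u) - z i ^ (k-2) := by
      intro u hu
      simp only [mem_range] at hu
      have p1 : z i ^ (k-1-t) * z i ^ u = z i ^ (k-1-t+u) := by rw [← pow_add]
      have p2 : z i ^ (k-1-t) * z i ^ (t-1) = z i ^ (k-2) := by
        rw [← pow_add]; congr 1; omega
      rw [mul_sub, p2, show z i ^ (k-1-t) * ((∑ j, z j ^ (t-1-u)) * z i ^ u)
        = (∑ j, z j ^ (t-1-u)) * (z i ^ (k-1-t) * z i ^ u) from by ring, p1]
    rw [mul_sub, e1, Finset.mul_sum, Finset.sum_congr rfl e2]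
    ring
  rw [Finset.sum_congr rfl h3, Finset.sum_add_distrib, Finset.sum_const, card_range,
    nsmul_eq_mul]
  ring

/-! ### Similar matrices have the same characteristic polynomial -/

lemma charpoly_similar {n : Type*} [Fintype n] [DecidableEq n]
    (M P : Matrix n n ℝ) (hP : IsUnit P.det) :
    (P * M * P⁻¹).charpoly = M.charpoly := by
  have hPP : P * P⁻¹ = 1 := Matrix.mul_nonsing_inv P hP
  have hPP' : P⁻¹ * P = 1 := Matrix.nonsing_inv_mul P hP
  have hmap : (P.map C) * ((P⁻¹).map C) = 1 := by
    rw [← Matrix.map_mul, hPP]; exact Matrix.map_one _ C.map_zero C.map_one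
  have hmap' : ((P⁻¹).map C) * (P.map C) = 1 := by
    rw [← Matrix.map_mul, hPP']; exact Matrix.map_one _ C.map_zero C.map_one
  have hcomm : ∀ Q : Matrix n n ℝ[X], Q * Matrix.scalar n (X : ℝ[X])
      = Matrix.scalar n (X : ℝ[X]) * Q := fun Q =>
    (Matrix.scalar_commute (X : ℝ[X]) (fun r => Commute.all _ _) Q).symm
  have h1 : Matrix.charmatrix (P * M * P⁻¹)
      = (P.map C) * Matrix.charmatrix M * ((P⁻¹).map C) := by
    unfold Matrix.charmatrix
    rw [Matrix.mul_sub, Matrix.sub_mul]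
    congr 1
    · rw [hcomm (P.map C), Matrix.mul_assoc, hmap, Matrix.mul_one]
    · simp only [RingHom.mapMatrix_apply]
      rw [← Matrix.map_mul, ← Matrix.map_mul]
  rw [Matrix.charpoly, Matrix.charpoly, h1, Matrix.det_mul, Matrix.det_mul]
  have : ((P⁻¹).map C).det * (P.map C).det = 1 := by
    rw [← Matrix.det_mul, hmap', Matrix.det_one]
  calc (P.map C).det * (Matrix.charmatrix M).det * ((P⁻¹).map C).det
      = ((P⁻¹).map C).det * (P.map C).det * (Matrix.charmatrix M).det := by ring
    _ = (Matrix.charmatrix M).det := by rw [this, one_mul]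

end Statement7Aux

open Statement7Aux Finset

/-- For `z` the vector of ordered zeros of the Hermite polynomial `H_N`, the matrix
`A` with `A_{ij} = 1/(z_i - z_j)²` for `i ≠ j` and `A_{ii} = -∑_{j≠i} 1/(z_i - z_j)²`
is such that `E - A` has eigenvalues `1, 2, …, N` counted with multiplicity
(expressed via the characteristic polynomial). -/
theorem statement7 (N : ℕ) (hN : 2 ≤ N) (z : Fin N → ℝ) (hz : StrictAnti z)
    (hzero : ∀ i, physHermite N (z i) = 0)
    (hall : ∀ w : ℝ, physHermite N w = 0 → ∃ i, w = z i)
    (A : Matrix (Fin N) (Fin N) ℝ)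
    (hA : ∀ i j : Fin N, A i j =
      if i = j then -∑ l ∈ Finset.univ.erase i, 1/(z i - z l)^2
      else 1/(z i - z j)^2) :
    (1 - A).charpoly = ∏ k ∈ Finset.range N, (X - C ((k : ℝ) + 1)) := by
  classical
  have hzinj : Function.Injective z := hz.injective
  -- roots of HP N
  have hroots : ∀ i, (HP N).eval (z i) = 0 := fun i => by
    rw [← physHermite_eq]; exact hzero i
  -- factorization
  have hfact : HP N = C ((2:ℝ)^N) * Lagrange.nodal univ z := by
    set f := HP N - C ((2:ℝ)^N) * Lagrange.nodal univ z with hf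
    have hcardN : (univ : Finset (Fin N)).card = N := by simp
    have hnodaldeg : (Lagrange.nodal (univ : Finset (Fin N)) z).natDegree = N := by
      rw [Lagrange.natDegree_nodal, hcardN]
    have hcoeffN : f.coeff N = 0 := by
      rw [hf, coeff_sub, (HP_deg_coeff N).2, coeff_C_mul]
      have : (Lagrange.nodal (univ : Finset (Fin N)) z).coeff N = 1 := by
        have h1 := (Lagrange.nodal_monic (s := (univ : Finset (Fin N))) (v := z)).coeff_natDegree
        rwa [hnodaldeg] at h1
      rw [this, mul_one, sub_self]
    have hdegle : f.natDegree ≤ N := by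
      refine le_trans (natDegree_sub_le _ _) (max_le (HP_deg_coeff N).1.le ?_)
      refine le_trans (natDegree_mul_le) ?_
      simp [hnodaldeg]
    have hfzero : f = 0 := by
      rcases eq_or_ne f 0 with h | h
      · exact h
      refine Polynomial.eq_zero_of_natDegree_lt_card_of_eval_eq_zero f hzinj (fun i => ?_) ?_
      · rw [hf]
        simp [hroots i, Lagrange.eval_nodal_at_node (mem_univ i)]
      · rw [Fintype.card_fin]
        have hne : f.natDegree ≠ N := by
          intro hdeq
          apply h
          rw [← leadingCoeff_eq_zero, leadingCoeff, hdeq, hcoeffN]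
        omega
    exact sub_eq_zero.mp hfzero
  -- ODE at the nodes for the nodal polynomial
  have hc0 : ((2:ℝ)^N) ≠ 0 := by positivity
  have hode : ∀ i, eval (z i) (derivative (derivative (Lagrange.nodal univ z)))
      = 2 * z i * eval (z i) (derivative (Lagrange.nodal univ z)) := by
    intro i
    have h := congrArg (eval (z i)) (HP_ode N)
    rw [hfact] at h
    rw [derivative_C_mul, derivative_C_mul] at h
    simp only [eval_sub, eval_mul, eval_C, eval_X,
      Lagrange.eval_nodal_at_node (mem_univ i)] at h
    apply mul_left_cancel₀ hc0
    rw [h]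
    ring
  have hstil := stieltjes z hzinj hode
  -- matrix similarity
  set V : Matrix (Fin N) (Fin N) ℝ := Matrix.vandermonde z with hV
  have hVdet : IsUnit V.det := by
    rw [isUnit_iff_ne_zero, hV]
    exact Matrix.det_vandermonde_ne_zero_iff.mpr hzinj
  set T : Matrix (Fin N) (Fin N) ℝ :=
    Matrix.of (fun m k : Fin N => (gpoly z (k:ℕ)).coeff (m:ℕ)) with hT
  have hAV : A * V = V * T := by
    ext i k
    rw [Matrix.mul_apply, Matrix.mul_apply]
    have hlhs : ∑ j, A i j * V j k = eval (z i) (gpoly z (k:ℕ)) :=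
      key_identity z hzinj hstil A hA i (k:ℕ)
    rw [hlhs]
    have hdeg : (gpoly z (k:ℕ)).natDegree < N :=
      lt_of_le_of_lt (gpoly_natDegree_le z (k:ℕ)) k.isLt
    rw [eval_eq_sum_range' hdeg, ← Fin.sum_univ_eq_sum_range
      (fun m => (gpoly z (k:ℕ)).coeff m * z i ^ m)]
    exact Finset.sum_congr rfl fun m _ => by
      rw [hV, hT]
      simp [Matrix.vandermonde]
      ring
  have hsim : V * (1 - T) * V⁻¹ = 1 - A := by
    rw [Matrix.mul_sub, Matrix.mul_one, ← hAV, Matrix.sub_mul, Matrix.mul_assoc,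
      Matrix.mul_nonsing_inv _ hVdet]
    simp
  rw [← hsim, charpoly_similar _ _ hVdet]
  have htri : (1 - T).BlockTriangular id := by
    intro i j hij
    simp only [Matrix.sub_apply, Matrix.one_apply, hT, Matrix.of_apply]
    rw [if_neg (fun h => absurd h (by exact fun h' => lt_irrefl _ (h' ▸ hij)))]
    have h0 : (gpoly z (j:ℕ)).coeff (i:ℕ) = 0 := gpoly_coeff_eq_zero z _ _ hij
    rw [h0, zero_sub, neg_zero]
  rw [Matrix.charpoly_of_upperTriangular _ htri]
  rw [← Fin.prod_univ_eq_prod_range (fun k => (X - C ((k:ℝ)+1)))]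
  refine Finset.prod_congr rfl fun i _ => ?_
  have hdiag : (1 - T) i i = 1 + (i:ℝ) := by
    simp only [Matrix.sub_apply, Matrix.one_apply_eq, hT, Matrix.of_apply]
    rw [gpoly_coeff_self]
    ring
  rw [hdiag]
  ring_nf
end
end

section
/- Let N ≥ 1 and let A ∈ ℝ^{N×N} be a real symmetric matrix such that E − 2A has eigenvalues 2, 4, …, 2N (counted with multiplicity). Then for all c > 0 and t > 0, ∫₀ᵗ exp( 2 ln((t + c²)/(s + c²)) · A ) ds = (t + c²) · (E − 2A)⁻¹ · ( E − exp( ln(c²/(t + c²)) · (E − 2A) ) ), and this symmetric matrix has eigenvalues λ_k = (1/(2k)) · ((t + c²)^{2k} − c^{4k}) / (t + c²)^{2k−1} for k = 1,…,N. -/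
open scoped BigOperators
open Polynomial

noncomputable section

namespace StatementAux

variable {n : Type*} [Fintype n] [DecidableEq n]

lemma charpoly_conj (P Q B : Matrix n n ℝ) (h1 : P * Q = 1) (_h2 : Q * P = 1) :
    (P * B * Q).charpoly = B.charpoly := by
  classical
  let φ : Matrix n n ℝ →+* Matrix n n ℝ[X] := RingHom.mapMatrix (m := n) (C : ℝ →+* ℝ[X])
  have hsc : ∀ (Y : Matrix n n ℝ[X]), Matrix.scalar n (X : ℝ[X]) * Y
      = Y * Matrix.scalar n (X : ℝ[X]) := fun Y =>
    (Matrix.scalar_commute (X : ℝ[X]) (fun r' => Commute.all _ r') Y).eq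
  have hch : Matrix.charmatrix (P * B * Q) = φ P * Matrix.charmatrix B * φ Q := by
    rw [Matrix.charmatrix, Matrix.charmatrix]
    have : (φ (P * B * Q) : Matrix n n ℝ[X]) = φ P * φ B * φ Q := by
      simp [map_mul]
    show Matrix.scalar n (X : ℝ[X]) - φ (P * B * Q) = _
    rw [this, mul_sub, sub_mul]
    congr 1
    rw [← hsc, mul_assoc, ← map_mul, h1, map_one, mul_one]
  rw [Matrix.charpoly, Matrix.charpoly, hch, Matrix.det_mul, Matrix.det_mul]
  have : (φ P).det * Matrix.det (Matrix.charmatrix B) * (φ Q).det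
      = ((φ P).det * (φ Q).det) * Matrix.det (Matrix.charmatrix B) := by ring
  rw [this, ← Matrix.det_mul (φ P) (φ Q), ← map_mul φ, h1, map_one, Matrix.det_one, one_mul]

lemma charpoly_diag [LinearOrder n] (d : n → ℝ) :
    (Matrix.diagonal d).charpoly = ∏ i, (X - C (d i)) := by
  rw [Matrix.charpoly_of_upperTriangular _ (Matrix.blockTriangular_diagonal d)]
  simp [Matrix.diagonal_apply_eq]

end StatementAux

/-- For a real symmetric `N×N` matrix `A` such that `E - 2A` has eigenvalues
`2, 4, …, 2N` (counted with multiplicity, expressed via the characteristic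
polynomial), the entrywise integral
`∫₀ᵗ exp(2 ln((t+c²)/(s+c²))·A) ds` equals
`(t + c²)·(E-2A)⁻¹·(E - exp(ln(c²/(t+c²))·(E-2A)))`, and the latter symmetric
matrix has eigenvalues `λ_k = (1/(2k))·((t+c²)^{2k} - c^{4k})/(t+c²)^{2k-1}`,
`k = 1,…,N`. -/


theorem statement11 (N : ℕ) (hN : 1 ≤ N) (A : Matrix (Fin N) (Fin N) ℝ)
    (hsymm : A.IsSymm)
    (heig : (1 - 2 • A).charpoly
      = ∏ k ∈ Finset.range N, (X - C (2 * ((k : ℝ) + 1))))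
    (c t : ℝ) (hc : 0 < c) (ht : 0 < t) :
    (Matrix.of fun i j =>
        ∫ s in (0:ℝ)..t,
          (NormedSpace.exp ((2 * Real.log ((t + c^2)/(s + c^2))) • A)) i j)
      = (t + c^2) •
        ((1 - 2 • A)⁻¹ *
          (1 - NormedSpace.exp (Real.log (c^2/(t + c^2)) • (1 - 2 • A)))) ∧
    ((t + c^2) •
        ((1 - 2 • A)⁻¹ *
          (1 - NormedSpace.exp (Real.log (c^2/(t + c^2)) • (1 - 2 • A))))).IsSymm ∧
    ((t + c^2) •
        ((1 - 2 • A)⁻¹ *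
          (1 - NormedSpace.exp (Real.log (c^2/(t + c^2)) • (1 - 2 • A))))).charpoly
      = ∏ k ∈ Finset.range N,
          (X - C ((1/(2*((k:ℝ)+1))) * ((t + c^2)^(2*(k+1)) - c^(4*(k+1)))
            / (t + c^2)^(2*(k+1) - 1))) := by
  classical
  have hc2 : (0:ℝ) < c^2 := by positivity
  have htc : (0:ℝ) < t + c^2 := by positivity
  have htc' : t + c^2 ≠ 0 := ne_of_gt htc
  set M : Matrix (Fin N) (Fin N) ℝ := 1 - 2 • A with hMdef
  have h2A : (2:ℕ) • A = (2:ℝ) • A := by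
    rw [← Nat.cast_smul_eq_nsmul ℝ]; norm_num
  set ℓ : ℝ := Real.log (c^2/(t + c^2)) with hldef
  -- symmetry of M
  have hMsymm : M.IsSymm := by
    unfold Matrix.IsSymm
    rw [hMdef, Matrix.transpose_sub, Matrix.transpose_one, Matrix.transpose_smul, hsymm.eq]
  have hHerm : M.IsHermitian := by
    rw [Matrix.IsHermitian, Matrix.conjTranspose_eq_transpose_of_trivial]
    exact hMsymm
  -- spectral decomposition
  set d : Fin N → ℝ := hHerm.eigenvalues with hddef
  set P : Matrix (Fin N) (Fin N) ℝ := (hHerm.eigenvectorUnitary : Matrix (Fin N) (Fin N) ℝ)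
    with hPdef
  set Q : Matrix (Fin N) (Fin N) ℝ := star P with hQdef
  have hPQ : P * Q = 1 := (Matrix.mem_unitaryGroup_iff).mp (hHerm.eigenvectorUnitary).2
  have hQP : Q * P = 1 := (Matrix.mem_unitaryGroup_iff').mp (hHerm.eigenvectorUnitary).2
  have hspec : M = P * Matrix.diagonal d * Q := by
    have := hHerm.spectral_theorem
    simpa [RCLike.ofReal_real_eq_id] using this
  have hcpM : M.charpoly = ∏ i, (X - C (d i)) := by
    conv_lhs => rw [hspec]
    rw [StatementAux.charpoly_conj P Q _ hPQ hQP, StatementAux.charpoly_diag]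
  -- eigenvalue multiset
  have hmult : Finset.univ.val.map d
      = (Finset.range N).val.map (fun k : ℕ => 2 * ((k:ℝ) + 1)) := by
    have h1 : ((Finset.univ.val.map d).map (fun a => X - C a)).prod
        = (((Finset.range N).val.map (fun k : ℕ => 2 * ((k:ℝ) + 1))).map
            (fun a => X - C a)).prod := by
      rw [Multiset.map_map, Multiset.map_map]
      have e1 : M.charpoly
          = (Multiset.map ((fun a => X - C a) ∘ d) Finset.univ.val).prod := by
        rw [hcpM]; exact Finset.prod_eq_multiset_prod _ _
      have e2 : (∏ k ∈ Finset.range N, (X - C (2 * ((k : ℝ) + 1))))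
          = (Multiset.map ((fun a => X - C a) ∘ fun k : ℕ => 2 * ((k:ℝ) + 1))
              (Finset.range N).val).prod :=
        Finset.prod_eq_multiset_prod _ _
      exact e1.symm.trans (heig.trans e2)
    have := congrArg Polynomial.roots h1
    rwa [Polynomial.roots_multiset_prod_X_sub_C, Polynomial.roots_multiset_prod_X_sub_C]
      at this
  have hdpos : ∀ i, 0 < d i := by
    intro i
    have hmem : d i ∈ Finset.univ.val.map d :=
      Multiset.mem_map_of_mem d (Finset.mem_univ i)
    rw [hmult] at hmem
    obtain ⟨k, -, hk⟩ := Multiset.mem_map.mp hmem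
    rw [← hk]; positivity
  have hdne : ∀ i, d i ≠ 0 := fun i => ne_of_gt (hdpos i)
  -- inverse of M
  have hMinv : M⁻¹ = P * Matrix.diagonal (fun i => (d i)⁻¹) * Q := by
    apply Matrix.inv_eq_right_inv
    rw [hspec]
    calc P * Matrix.diagonal d * Q * (P * Matrix.diagonal (fun i => (d i)⁻¹) * Q)
        = P * Matrix.diagonal d * (Q * P) * Matrix.diagonal (fun i => (d i)⁻¹) * Q := by
          noncomm_ring
      _ = P * (Matrix.diagonal d * Matrix.diagonal (fun i => (d i)⁻¹)) * Q := by
          rw [hQP, mul_one]; noncomm_ring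
      _ = 1 := by
          rw [Matrix.diagonal_mul_diagonal]
          have : (fun i => d i * (d i)⁻¹) = fun _ => (1:ℝ) := by
            funext i; exact mul_inv_cancel₀ (hdne i)
          rw [this, Matrix.diagonal_one, mul_one, hPQ]
  have hPunit : IsUnit P := ⟨⟨P, Q, hPQ, hQP⟩, rfl⟩
  have hPinvQ : P⁻¹ = Q := Matrix.inv_eq_right_inv hPQ
  -- exponential of ℓ • M
  have hexpM : NormedSpace.exp (ℓ • M)
      = P * Matrix.diagonal (fun i => Real.exp (ℓ * d i)) * Q := by
    have hsm : ℓ • M = P * (ℓ • Matrix.diagonal d) * Q := by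
      rw [hspec, Matrix.mul_smul, Matrix.smul_mul]
    rw [hsm, ← hPinvQ, Matrix.exp_conj P _ hPunit, hPinvQ]
    congr 1
    congr 1
    rw [← Matrix.diagonal_smul, Matrix.exp_diagonal, Pi.exp_def]
    have : (fun i => NormedSpace.exp ((ℓ • d) i)) = fun i => Real.exp (ℓ * d i) := by
      funext i; rw [← Real.exp_eq_exp_ℝ]; rfl
    rw [this]
  -- description of the RHS matrix
  set R : Matrix (Fin N) (Fin N) ℝ :=
    (t + c^2) • (M⁻¹ * (1 - NormedSpace.exp (ℓ • M))) with hRdef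
  have hg : R = P * Matrix.diagonal
      (fun i => (t + c^2) * ((d i)⁻¹ * (1 - Real.exp (ℓ * d i)))) * Q := by
    have hsub : (1 : Matrix (Fin N) (Fin N) ℝ)
        - P * Matrix.diagonal (fun i => Real.exp (ℓ * d i)) * Q
        = P * (1 - Matrix.diagonal (fun i => Real.exp (ℓ * d i))) * Q := by
      rw [mul_sub, sub_mul, mul_one, hPQ]
    have collapse : ∀ (X Y : Matrix (Fin N) (Fin N) ℝ),
        P * X * Q * (P * Y * Q) = P * (X * Y) * Q := by
      intro X Y
      have h : P * X * Q * (P * Y * Q) = P * X * (Q * P) * (Y * Q) := by noncomm_ring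
      rw [h, hQP, mul_one]; noncomm_ring
    rw [hRdef, hMinv, hexpM, hsub, collapse]
    have hpush : ∀ (Z : Matrix (Fin N) (Fin N) ℝ),
        (t + c^2) • (P * Z * Q) = P * ((t + c^2) • Z) * Q := by
      intro Z
      rw [Matrix.mul_smul, Matrix.smul_mul]
    rw [hpush]
    congr 2
    have hdd : Matrix.diagonal (fun i => (d i)⁻¹)
        * (1 - Matrix.diagonal (fun i => Real.exp (ℓ * d i)))
        = Matrix.diagonal (fun i => (d i)⁻¹ * (1 - Real.exp (ℓ * d i))) := by
      rw [mul_sub, mul_one, Matrix.diagonal_mul_diagonal]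
      ext i j
      by_cases h : i = j <;> simp [h, Matrix.diagonal_apply, mul_sub]
    rw [hdd, ← Matrix.diagonal_smul]
    rfl
  -- determinant and two-sided inverse facts
  have hdet : IsUnit M.det := by
    have : M.det = ∏ i, d i := by
      rw [hspec, Matrix.det_mul, Matrix.det_mul, Matrix.det_diagonal]
      have h1 : P.det * (∏ i, d i) * Q.det = (P.det * Q.det) * ∏ i, d i := by ring
      rw [h1, ← Matrix.det_mul, hPQ, Matrix.det_one, one_mul]
    rw [this]
    refine isUnit_iff_ne_zero.mpr (ne_of_gt ?_)
    exact Finset.prod_pos fun i _ => hdpos i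
  have hMl : M⁻¹ * M = 1 := Matrix.nonsing_inv_mul M hdet
  have hMr : M * M⁻¹ = 1 := Matrix.mul_nonsing_inv M hdet
  -- part 2 : symmetry
  have hpart2 : R.IsSymm := by
    have hMinvsymm : (M⁻¹).IsSymm := by
      unfold Matrix.IsSymm
      rw [Matrix.transpose_nonsing_inv, hMsymm.eq]
    have hlMsymm : (ℓ • M).IsSymm := by
      unfold Matrix.IsSymm
      rw [Matrix.transpose_smul, hMsymm.eq]
    have hEsymm : (NormedSpace.exp (ℓ • M)).IsSymm := hlMsymm.exp
    have hQsymm : ((1 : Matrix (Fin N) (Fin N) ℝ) - NormedSpace.exp (ℓ • M)).IsSymm := by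
      unfold Matrix.IsSymm
      rw [Matrix.transpose_sub, Matrix.transpose_one, hEsymm.eq]
    -- commutation of M⁻¹ with the exponential
    have hcme : M * NormedSpace.exp (ℓ • M) = NormedSpace.exp (ℓ • M) * M := by
      have h1 : Commute M (ℓ • M) := (Commute.refl M).smul_right ℓ
      have h2 : Commute M (NormedSpace.exp (ℓ • M)) := by
        letI : SeminormedRing (Matrix (Fin N) (Fin N) ℝ) := Matrix.linftyOpSemiNormedRing
        letI : NormedRing (Matrix (Fin N) (Fin N) ℝ) := Matrix.linftyOpNormedRing
        letI : NormedAlgebra ℝ (Matrix (Fin N) (Fin N) ℝ) := Matrix.linftyOpNormedAlgebra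
        exact h1.exp_right
      exact h2.eq
    have hcinv : M⁻¹ * NormedSpace.exp (ℓ • M) = NormedSpace.exp (ℓ • M) * M⁻¹ := by
      calc M⁻¹ * NormedSpace.exp (ℓ • M)
          = M⁻¹ * NormedSpace.exp (ℓ • M) * (M * M⁻¹) := by rw [hMr, mul_one]
        _ = M⁻¹ * (NormedSpace.exp (ℓ • M) * M) * M⁻¹ := by noncomm_ring
        _ = M⁻¹ * (M * NormedSpace.exp (ℓ • M)) * M⁻¹ := by rw [hcme]
        _ = (M⁻¹ * M) * (NormedSpace.exp (ℓ • M) * M⁻¹) := by noncomm_ring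
        _ = NormedSpace.exp (ℓ • M) * M⁻¹ := by rw [hMl, one_mul]
    have hcq : M⁻¹ * ((1 : Matrix (Fin N) (Fin N) ℝ) - NormedSpace.exp (ℓ • M))
        = ((1 : Matrix (Fin N) (Fin N) ℝ) - NormedSpace.exp (ℓ • M)) * M⁻¹ := by
      rw [mul_sub, sub_mul, mul_one, one_mul, hcinv]
    unfold Matrix.IsSymm
    rw [hRdef, Matrix.transpose_smul, Matrix.transpose_mul, hMinvsymm.eq, hQsymm.eq, hcq]
  -- part 3 : charpoly
  have hpart3 : R.charpoly = ∏ k ∈ Finset.range N,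
      (X - C ((1/(2*((k:ℝ)+1))) * ((t + c^2)^(2*(k+1)) - c^(4*(k+1)))
        / (t + c^2)^(2*(k+1) - 1))) := by
    rw [hg, StatementAux.charpoly_conj _ _ _ hPQ hQP, StatementAux.charpoly_diag]
    have e1 : (∏ i, (X - C ((t + c^2) * ((d i)⁻¹ * (1 - Real.exp (ℓ * d i))))))
        = (Multiset.map ((fun a : ℝ => X - C ((t + c^2) * (a⁻¹ * (1 - Real.exp (ℓ * a)))))
            ∘ d) Finset.univ.val).prod :=
      Finset.prod_eq_multiset_prod _ _
    rw [e1, ← Multiset.map_map, hmult, Multiset.map_map, ← Finset.prod_eq_multiset_prod]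
    apply Finset.prod_congr rfl
    intro k _
    show X - C ((t + c^2) * ((2 * ((k:ℝ) + 1))⁻¹
        * (1 - Real.exp (ℓ * (2 * ((k:ℝ) + 1)))))) = _
    congr 1
    have hexp2 : Real.exp (ℓ * (2 * ((k:ℝ) + 1))) = (c^2/(t + c^2))^(2*(k+1)) := by
      have harg : ℓ * (2 * ((k:ℝ) + 1)) = ((2*(k+1) : ℕ) : ℝ) * ℓ := by push_cast; ring
      rw [harg, Real.exp_nat_mul, hldef, Real.exp_log (div_pos hc2 htc)]
    rw [hexp2]
    have hc4 : c^(4*(k+1)) = (c^2)^(2*(k+1)) := by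
      rw [← pow_mul]; congr 1; ring
    have hn : 2*(k+1) - 1 + 1 = 2*(k+1) := by omega
    have hpow : (t + c^2)^(2*(k+1)) = (t + c^2)^(2*(k+1) - 1) * (t + c^2) := by
      conv_lhs => rw [← hn]
      rw [pow_succ]
    have h2k : (2 * ((k:ℝ) + 1)) ≠ 0 := by positivity
    have hpowne : (t + c^2)^(2*(k+1) - 1) ≠ 0 := pow_ne_zero _ htc'
    rw [div_pow, hc4, hpow]
    field_simp
  -- part 1 : the integral
  have hpart1 : (Matrix.of fun i j =>
        ∫ s in (0:ℝ)..t,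
          (NormedSpace.exp ((2 * Real.log ((t + c^2)/(s + c^2))) • A)) i j) = R := by
    set f : ℝ → ℝ := fun s => 2 * Real.log ((t + c^2)/(s + c^2)) with hfdef
    set G : ℝ → Matrix (Fin N) (Fin N) ℝ :=
      fun s => (s + c^2) • (M⁻¹ * NormedSpace.exp (f s • A)) with hGdef
    have hM2 : M = 1 - (2:ℝ) • A := by rw [hMdef, h2A]
    -- the master derivative/continuity fact
    have master : ∀ (i j : Fin N) (s : ℝ), 0 < s + c^2 →
        HasDerivAt (fun u => G u i j) (NormedSpace.exp (f s • A) i j) s ∧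
        ContinuousAt (fun u => NormedSpace.exp (f u • A) i j) s := by
      intro i j s hs
      letI : SeminormedRing (Matrix (Fin N) (Fin N) ℝ) := Matrix.linftyOpSemiNormedRing
      letI : NormedRing (Matrix (Fin N) (Fin N) ℝ) := Matrix.linftyOpNormedRing
      letI : NormedAlgebra ℝ (Matrix (Fin N) (Fin N) ℝ) := Matrix.linftyOpNormedAlgebra
      let Lf : Matrix (Fin N) (Fin N) ℝ →ₗ[ℝ] ℝ :=
        { toFun := fun X => X i j
          map_add' := fun _ _ => rfl
          map_smul' := fun _ _ => rfl }
      let L : Matrix (Fin N) (Fin N) ℝ →L[ℝ] ℝ := LinearMap.toContinuousLinearMap Lf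
      have hlog : HasDerivAt (fun u : ℝ => Real.log (u + c^2)) (s + c^2)⁻¹ s := by
        have h1 : HasDerivAt (fun u : ℝ => u + c^2) 1 s := (hasDerivAt_id s).add_const _
        have h2 := (Real.hasDerivAt_log (ne_of_gt hs)).comp s h1
        rw [mul_one] at h2
        exact h2
      have hf' : HasDerivAt f (-2 / (s + c^2)) s := by
        have h2 : HasDerivAt
            (fun u : ℝ => 2 * (Real.log (t + c^2) - Real.log (u + c^2)))
            (-2/(s+c^2)) s := by
          have h3 := ((hasDerivAt_const s (Real.log (t+c^2))).sub hlog).const_mul (2:ℝ)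
          rw [show (-2/(s+c^2)) = 2 * (0 - (s + c ^ 2)⁻¹) by ring]
          exact h3
        apply h2.congr_of_eventuallyEq
        have hopen : IsOpen {u : ℝ | 0 < u + c^2} :=
          isOpen_lt continuous_const (continuous_id.add continuous_const)
        filter_upwards [hopen.mem_nhds hs] with u hu
        show f u = 2 * (Real.log (t + c^2) - Real.log (u + c^2))
        rw [hfdef]
        show 2 * Real.log ((t + c^2)/(u + c^2)) = _
        rw [Real.log_div (ne_of_gt htc) (ne_of_gt hu)]
      have hexp : HasDerivAt (fun u : ℝ => NormedSpace.exp (u • A))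
          (A * NormedSpace.exp (f s • A)) (f s) := hasDerivAt_exp_smul_const' A (f s)
      have h3 : HasDerivAt (fun u => NormedSpace.exp (f u • A))
          ((-2/(s+c^2)) • (A * NormedSpace.exp (f s • A))) s := hexp.scomp s hf'
      have h4 : HasDerivAt (fun u => M⁻¹ * NormedSpace.exp (f u • A))
          (M⁻¹ * ((-2/(s+c^2)) • (A * NormedSpace.exp (f s • A)))) s :=
        h3.const_mul M⁻¹
      have h5 : HasDerivAt G
          ((s + c^2) • (M⁻¹ * ((-2/(s+c^2)) • (A * NormedSpace.exp (f s • A))))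
            + (1:ℝ) • (M⁻¹ * NormedSpace.exp (f s • A))) s :=
        ((hasDerivAt_id s).add_const (c^2)).smul h4
      have hder : (s + c^2) • (M⁻¹ * ((-2/(s+c^2)) • (A * NormedSpace.exp (f s • A))))
            + (1:ℝ) • (M⁻¹ * NormedSpace.exp (f s • A))
          = NormedSpace.exp (f s • A) := by
        rw [one_smul, mul_smul_comm, smul_smul]
        have hcc : (s + c^2) * (-2/(s+c^2)) = -2 := by
          field_simp
        rw [hcc, add_comm]
        have expand : M⁻¹ * NormedSpace.exp (f s • A)
              + (-2:ℝ) • (M⁻¹ * (A * NormedSpace.exp (f s • A)))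
            = M⁻¹ * (M * NormedSpace.exp (f s • A)) := by
          rw [hM2, sub_mul, one_mul, Matrix.smul_mul, mul_sub, mul_smul_comm]
          rw [neg_smul, ← sub_eq_add_neg]
        rw [expand, ← mul_assoc, hMl, one_mul]
      rw [hder] at h5
      constructor
      · exact L.hasFDerivAt.comp_hasDerivAt s h5
      · exact (L.hasFDerivAt.comp_hasDerivAt s h3).continuousAt
    have hsp : ∀ s ∈ Set.uIcc (0:ℝ) t, 0 < s + c^2 := by
      intro s hs
      rw [Set.uIcc_of_le ht.le] at hs
      have := hs.1
      nlinarith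
    -- fundamental theorem of calculus, entrywise
    have hint : ∀ i j, (∫ s in (0:ℝ)..t, NormedSpace.exp (f s • A) i j)
        = G t i j - G 0 i j := by
      intro i j
      apply intervalIntegral.integral_eq_sub_of_hasDerivAt
      · intro s hs
        exact (master i j s (hsp s hs)).1
      · apply ContinuousOn.intervalIntegrable
        intro s hs
        exact ((master i j s (hsp s hs)).2).continuousWithinAt
    -- identify R with G t - G 0
    have hft : f t = 0 := by
      show 2 * Real.log ((t + c^2)/(t + c^2)) = 0
      rw [div_self htc', Real.log_one, mul_zero]
    have hGt : G t = (t + c^2) • M⁻¹ := by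
      rw [hGdef]
      show (t + c^2) • (M⁻¹ * NormedSpace.exp (f t • A)) = _
      rw [hft, zero_smul, NormedSpace.exp_zero, mul_one]
    have hf0 : f 0 = (-2) * ℓ := by
      show 2 * Real.log ((t + c^2)/((0:ℝ) + c^2)) = (-2) * ℓ
      rw [hldef, zero_add]
      rw [show Real.log (c^2/(t + c^2)) = - Real.log ((t + c^2)/c^2) by
        rw [← Real.log_inv, inv_div]]
      ring
    have hsplit : ℓ • M = ℓ • (1 : Matrix (Fin N) (Fin N) ℝ) + f 0 • A := by
      rw [hM2, smul_sub, smul_smul, hf0, sub_eq_add_neg, ← neg_smul]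
      ring_nf
    have hcomm : Commute (ℓ • (1 : Matrix (Fin N) (Fin N) ℝ)) (f 0 • A) :=
      ((Commute.one_left A).smul_left ℓ).smul_right (f 0)
    have hexpone : NormedSpace.exp (ℓ • (1 : Matrix (Fin N) (Fin N) ℝ))
        = Real.exp ℓ • (1 : Matrix (Fin N) (Fin N) ℝ) := by
      rw [Matrix.smul_one_eq_diagonal, Matrix.exp_diagonal, Pi.exp_def,
        Matrix.smul_one_eq_diagonal]
      congr 1
      funext i
      rw [← Real.exp_eq_exp_ℝ]
    have hexpℓM : NormedSpace.exp (ℓ • M)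
        = (c^2/(t + c^2)) • NormedSpace.exp (f 0 • A) := by
      rw [hsplit, Matrix.exp_add_of_commute _ _ hcomm, hexpone,
        Matrix.smul_mul, one_mul, Real.exp_log (div_pos hc2 htc)]
    have hGR : R = G t - G 0 := by
      rw [hRdef, hexpℓM, hGt, hGdef]
      show (t + c^2) • (M⁻¹ * (1 - (c^2/(t + c^2)) • NormedSpace.exp (f 0 • A)))
          = (t + c^2) • M⁻¹ - ((0:ℝ) + c^2) • (M⁻¹ * NormedSpace.exp (f 0 • A))
      rw [mul_sub, mul_one, mul_smul_comm, smul_sub, smul_smul, zero_add]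
      congr 2
      field_simp
    ext i j
    show (∫ s in (0:ℝ)..t, NormedSpace.exp (f s • A) i j) = R i j
    rw [hint i j, hGR]
    simp [Matrix.sub_apply]
  exact ⟨hpart1, hpart2, hpart3⟩
end
end

section
/- Let N ≥ 1, let ν > 0, and let z_1 > z_2 > … > z_N > 0 be real numbers that are precisely the zeros of the Laguerre polynomial L_N^{(ν−1)}. Define y ∈ ℝ^N by y_i := √(2 z_i) and the symmetric matrix A_ν ∈ ℝ^{N×N} by A_{ν,ij} := 1/(y_i − y_j)² − 1/(y_i + y_j)² for i ≠ j and A_{ν,ii} := ∑_{j≠i} ( −1/(y_i − y_j)² − 1/(y_i + y_j)² ) − ν/y_i². Then the matrix E − 2A_ν has eigenvalues 2, 4, …, 2N (counted with multiplicity), independently of ν. -/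
open scoped BigOperators
open Polynomial

noncomputable section

/-- The `n`-th Laguerre polynomial `L_n^{(α)}` (as a function). -/
def laguerre (n : ℕ) (α : ℝ) (x : ℝ) : ℝ :=
  ∑ k ∈ Finset.range (n+1),
    ((∏ m ∈ Finset.range (n - k), (α + k + m + 1)) / (Nat.factorial (n - k))) *
      ((-x)^k / (Nat.factorial k))

namespace Statement12Aux

open Finset

/-! ### Algebraic identities -/

lemma ident (m : ℕ) (a b : ℝ) :
    (a+b)*a^m - 2*b^(m+1)
      = (2*(m:ℝ)+1)*a^m*(a-b) - (a-b)^2 * ∑ k ∈ range m, (2*(k:ℝ)+2)*a^k*b^(m-1-k) := by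
  induction m with
  | zero => simp; ring
  | succ m ih =>
    have hgeom := geom_sum₂_mul a b (m+1)
    simp only [Nat.add_sub_cancel] at hgeom ⊢
    have e1 : ∀ k, m - (k+1) = m-1-k := fun k => by omega
    have hterm : ∀ k ∈ range m,
        (2*((k:ℕ)+1:ℝ)+2)*a^(k+1)*b^(m-(k+1))
          = 2*(a^(k+1)*b^(m-(k+1))) + a*((2*(k:ℝ)+2)*a^k*b^(m-1-k)) := by
      intro k _; rw [e1 k]
      have : m - 1 - k = m - (k+1) := by omega
      rw [this]; push_cast; ring
    have hsplit : ∑ k ∈ range (m+1), (2*(k:ℝ)+2)*a^k*b^(m-k)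
        = 2*(∑ k ∈ range (m+1), a^k*b^(m-k))
          + a*∑ k ∈ range m, (2*(k:ℝ)+2)*a^k*b^(m-1-k) := by
      rw [Finset.sum_range_succ' (fun k => (2*(k:ℝ)+2)*a^k*b^(m-k)) m,
          Finset.sum_range_succ' (fun k => a^k*b^(m-k)) m]
      push_cast
      rw [Finset.sum_congr rfl hterm, Finset.sum_add_distrib, ← Finset.mul_sum,
          ← Finset.mul_sum]
      ring
    rw [hsplit]
    push_cast
    linear_combination a * ih + 2*(a-b)*hgeom

lemma ident_div (m : ℕ) {a b : ℝ} (h : a - b ≠ 0) :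
    ((a+b)*a^m - 2*b^(m+1))/(a-b)^2
      = (2*(m:ℝ)+1)*a^m/(a-b) - ∑ k ∈ range m, (2*(k:ℝ)+2)*a^k*b^(m-1-k) := by
  rw [ident m a b]
  field_simp

/-! ### The Laguerre polynomial as a `Polynomial ℝ` -/

/-- Coefficients of `L_N^{(ν-1)}`. -/
def lc (N : ℕ) (ν : ℝ) (k : ℕ) : ℝ :=
  (∏ m ∈ range (N-k), (ν + k + m)) / (N-k).factorial * ((-1)^k / k.factorial)

def LP (N : ℕ) (ν : ℝ) : ℝ[X] :=
  ∑ k ∈ range (N+1), C (lc N ν k) * X^k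

lemma LP_coeff (N : ℕ) (ν : ℝ) (k : ℕ) :
    (LP N ν).coeff k = if k ≤ N then lc N ν k else 0 := by
  rw [LP, Polynomial.finset_sum_coeff]
  simp only [Polynomial.coeff_C_mul, Polynomial.coeff_X_pow, mul_ite, mul_one, mul_zero]
  rw [Finset.sum_ite_eq (range (N+1)) k (fun k => lc N ν k)]
  simp [Nat.lt_succ_iff]

lemma LP_coeff_rec (N : ℕ) (ν : ℝ) (k : ℕ) :
    ((k:ℝ)+1) * ((k:ℝ)+ν) * (LP N ν).coeff (k+1) = ((k:ℝ) - N) * (LP N ν).coeff k := by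
  rcases lt_trichotomy k N with h | h | h
  · rw [LP_coeff, LP_coeff, if_pos (by omega), if_pos (by omega)]
    unfold lc
    have h1 : N - k = (N - (k+1)) + 1 := by omega
    have h2 : ∏ m ∈ range (N-k), (ν + k + m)
        = (∏ m ∈ range (N-(k+1)), (ν + (k+1) + m)) * (ν + k) := by
      rw [h1, Finset.prod_range_succ' (fun m => (ν + k + m))]
      simp only [Nat.cast_zero, add_zero, Nat.cast_add, Nat.cast_one]
      congr 1
      apply Finset.prod_congr rfl
      intro m _; push_cast; ring
    have h3 : ((N-k).factorial : ℝ) = ((N:ℝ)-k) * ((N-(k+1)).factorial : ℝ) := by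
      rw [h1, Nat.factorial_succ, Nat.cast_mul]
      congr 1
      rw [← h1, Nat.cast_sub h.le]
    have h4 : ((k+1).factorial : ℝ) = (k+1) * k.factorial := by
      rw [Nat.factorial_succ]; push_cast; ring
    have h5 : ((N:ℝ) - k) ≠ 0 := by
      have : (k:ℝ) < N := by exact_mod_cast h
      linarith
    rw [h2, h3, h4]
    have hf1 : ((N-(k+1)).factorial : ℝ) ≠ 0 := by exact_mod_cast (N-(k+1)).factorial_ne_zero
    have hf2 : (k.factorial : ℝ) ≠ 0 := by exact_mod_cast k.factorial_ne_zero
    have hk1 : ((k:ℝ)+1) ≠ 0 := by positivity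
    push_cast
    field_simp
    ring
  · subst h
    rw [LP_coeff, LP_coeff, if_neg (by omega), if_pos le_rfl]
    simp
  · rw [LP_coeff, LP_coeff, if_neg (by omega), if_neg (by omega)]
    simp

lemma LP_eval (N : ℕ) (ν : ℝ) (x : ℝ) : (LP N ν).eval x = laguerre N (ν-1) x := by
  rw [LP, laguerre, Polynomial.eval_finset_sum]
  apply Finset.sum_congr rfl
  intro k _
  rw [Polynomial.eval_mul, Polynomial.eval_C, Polynomial.eval_pow, Polynomial.eval_X, lc]
  rw [neg_pow x k]
  have : ∏ m ∈ range (N-k), (ν - 1 + ↑k + ↑m + 1) = ∏ m ∈ range (N-k), (ν + ↑k + ↑m) := by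
    apply Finset.prod_congr rfl; intro m _; ring
  rw [this]
  ring

lemma LP_ODE (N : ℕ) (ν : ℝ) :
    X * derivative (derivative (LP N ν)) + (C ν - X) * derivative (LP N ν)
      + C (N:ℝ) * LP N ν = 0 := by
  have hrec : ∀ k : ℕ, ((k:ℝ)+1) * ((k:ℝ)+ν) * (LP N ν).coeff (k+1)
      = ((k:ℝ) - N) * (LP N ν).coeff k := LP_coeff_rec N ν
  ext n
  simp only [Polynomial.coeff_add, Polynomial.coeff_zero, Polynomial.coeff_C_mul,
    Polynomial.coeff_sub, sub_mul, Polynomial.coeff_sub]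
  cases n with
  | zero =>
    have hx0 : ∀ q : ℝ[X], (X * q).coeff 0 = 0 := by
      intro q; rw [Polynomial.mul_coeff_zero, Polynomial.coeff_X_zero, zero_mul]
    rw [hx0, hx0]
    simp only [Polynomial.coeff_derivative, Polynomial.coeff_zero]
    have := hrec 0
    push_cast at this ⊢
    linarith [this]
  | succ n =>
    rw [Polynomial.coeff_X_mul, Polynomial.coeff_X_mul]
    simp only [Polynomial.coeff_derivative]
    have h1 := hrec (n+1)
    push_cast at h1 ⊢
    nlinarith [h1]

/-! ### Factorization over the zeros -/

lemma deriv_prod_X_sub_C {ι : Type*} [DecidableEq ι] (s : Finset ι) (f : ι → ℝ) :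
    derivative (∏ i ∈ s, (X - C (f i))) = ∑ i ∈ s, ∏ j ∈ s.erase i, (X - C (f j)) := by
  induction s using Finset.induction_on with
  | empty => simp
  | @insert a s ha ih =>
    rw [Finset.prod_insert ha, derivative_mul, ih, Finset.sum_insert ha,
        Finset.erase_insert ha]
    simp only [derivative_sub, derivative_X, derivative_C, sub_zero, one_mul]
    congr 1
    rw [Finset.mul_sum]
    apply Finset.sum_congr rfl
    intro i hi
    rw [Finset.erase_insert_of_ne (by rintro rfl; exact ha hi), Finset.prod_insert
      (fun h => ha (Finset.mem_of_mem_erase h))]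

variable {N : ℕ} {ν : ℝ}

lemma LP_factor (z : Fin N → ℝ) (hinj : Function.Injective z)
    (hroot : ∀ i, (LP N ν).eval (z i) = 0) :
    ∃ c : ℝ, c ≠ 0 ∧ LP N ν = (∏ i, (X - C (z i))) * C c := by
  classical
  set q : ℝ[X] := ∏ i, (X - C (z i)) with hq
  have hqmonic : q.Monic := monic_prod_of_monic _ _ (fun i _ => monic_X_sub_C _)
  have hqdeg : q.natDegree = N := by
    rw [hq, Polynomial.natDegree_prod _ _ (fun i _ => X_sub_C_ne_zero (z i))]
    simp [Polynomial.natDegree_X_sub_C]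
  have hlcN : lc N ν N = (-1)^N / N.factorial := by
    rw [lc]; simp
  have hcoef : (LP N ν).coeff N = (-1)^N / N.factorial := by
    rw [LP_coeff, if_pos le_rfl, hlcN]
  have hLPne : LP N ν ≠ 0 := by
    intro h
    rw [h, Polynomial.coeff_zero] at hcoef
    have hf : ((N.factorial : ℝ)) ≠ 0 := by exact_mod_cast N.factorial_ne_zero
    exact (div_ne_zero (pow_ne_zero _ (by norm_num)) hf) hcoef.symm
  have hdegle : (LP N ν).natDegree ≤ N := by
    apply Polynomial.natDegree_le_iff_coeff_eq_zero.mpr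
    intro m hm
    rw [LP_coeff, if_neg (by omega)]
  have hdvd : q ∣ LP N ν := by
    have hle : (Multiset.map z Finset.univ.val) ≤ (LP N ν).roots := by
      rw [Multiset.le_iff_count]
      intro a
      by_cases ha : a ∈ Multiset.map z Finset.univ.val
      · have hnodup : (Multiset.map z Finset.univ.val).Nodup :=
          Multiset.Nodup.map hinj Finset.univ.nodup
        have h1 : (Multiset.map z Finset.univ.val).count a = 1 :=
          Multiset.count_eq_one_of_mem hnodup ha
        obtain ⟨i, _, rfl⟩ := Multiset.mem_map.mp ha
        have : z i ∈ (LP N ν).roots := by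
          rw [Polynomial.mem_roots hLPne]
          exact hroot i
        rw [h1]
        exact Multiset.one_le_count_iff_mem.mpr this
      · rw [Multiset.count_eq_zero_of_notMem ha]; omega
    calc q = (Multiset.map (fun a => X - C a) (Multiset.map z Finset.univ.val)).prod := by
            rw [Multiset.map_map]; rfl
      _ ∣ ((LP N ν).roots.map (fun a => X - C a)).prod :=
            Multiset.prod_dvd_prod_of_le (Multiset.map_le_map hle)
      _ ∣ LP N ν := (LP N ν).prod_multiset_X_sub_C_dvd
  obtain ⟨r, hr⟩ := hdvd
  have hrne : r ≠ 0 := by rintro rfl; rw [mul_zero] at hr; exact hLPne hr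
  have hqne : q ≠ 0 := hqmonic.ne_zero
  have hdeg : (LP N ν).natDegree = N + r.natDegree := by
    rw [hr, Polynomial.natDegree_mul hqne hrne, hqdeg]
  have hr0 : r.natDegree = 0 := by omega
  refine ⟨r.coeff 0, ?_, ?_⟩
  · intro h
    exact hrne (by rw [Polynomial.eq_C_of_natDegree_eq_zero hr0, h, map_zero])
  · rw [hr]; congr 1; exact Polynomial.eq_C_of_natDegree_eq_zero hr0

/-! ### The Stieltjes electrostatic identity -/

theorem stieltjes {z : Fin N → ℝ} (hinj : Function.Injective z) (hz0 : ∀ i, z i ≠ 0)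
    (hode : ∀ x : ℝ, x * (derivative (derivative (∏ i, (X - C (z i)) : ℝ[X]))).eval x
        + (ν - x) * (derivative (∏ i, (X - C (z i)) : ℝ[X])).eval x
        + N * (∏ i, (X - C (z i)) : ℝ[X]).eval x = 0)
    (i : Fin N) :
    ∑ j ∈ univ.erase i, 1/(z i - z j) = (z i - ν)/(2 * z i) := by
  classical
  set q : ℝ[X] := ∏ j, (X - C (z j)) with hq
  have hzz : ∀ j ∈ univ.erase i, z i - z j ≠ 0 := by
    intro j hj
    have : j ≠ i := Finset.ne_of_mem_erase hj
    exact sub_ne_zero_of_ne (fun h => this (hinj h.symm))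
  set D : ℝ := ∏ j ∈ univ.erase i, (z i - z j) with hD
  have hDne : D ≠ 0 := Finset.prod_ne_zero_iff.mpr hzz
  set E : Fin N → ℝ := fun b => ∏ l ∈ (univ.erase i).erase b, (z i - z l) with hE
  have hd1 : derivative q = ∑ a, ∏ j ∈ univ.erase a, (X - C (z j)) :=
    deriv_prod_X_sub_C _ _
  have heval_erase : ∀ a, a ≠ i → (∏ j ∈ univ.erase a, (X - C (z j))).eval (z i) = 0 := by
    intro a ha
    rw [Polynomial.eval_prod]
    apply Finset.prod_eq_zero (Finset.mem_erase.mpr ⟨fun h => ha h.symm, Finset.mem_univ i⟩)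
    simp
  have hq'i : (derivative q).eval (z i) = D := by
    rw [hd1, Polynomial.eval_finset_sum]
    rw [Finset.sum_eq_single i]
    · rw [Polynomial.eval_prod]; simp [hD]
    · intro a _ ha; exact heval_erase a ha
    · intro h; exact absurd (Finset.mem_univ i) h
  have hd2 : derivative (derivative q)
      = ∑ a, ∑ b ∈ univ.erase a, ∏ l ∈ (univ.erase a).erase b, (X - C (z l)) := by
    rw [hd1, derivative_sum]
    apply Finset.sum_congr rfl
    intro a _
    exact deriv_prod_X_sub_C _ _
  have hq''i : (derivative (derivative q)).eval (z i) = 2 * ∑ b ∈ univ.erase i, E b := by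
    rw [hd2, Polynomial.eval_finset_sum]
    have hinner : ∀ a, a ≠ i →
        (∑ b ∈ univ.erase a, ∏ l ∈ (univ.erase a).erase b, (X - C (z l))).eval (z i)
          = E a := by
      intro a ha
      rw [Polynomial.eval_finset_sum]
      rw [Finset.sum_eq_single i]
      · have hee : (univ.erase a).erase i = (univ.erase i).erase a := by
          ext x; simp only [Finset.mem_erase, Finset.mem_univ, and_true]; tauto
        rw [hee, Polynomial.eval_prod]
        simp [hE]
      · intro b hb hbne
        rw [Polynomial.eval_prod]
        apply Finset.prod_eq_zero (Finset.mem_erase.mpr ⟨fun h => hbne h.symm,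
            Finset.mem_erase.mpr ⟨fun h => ha h.symm, Finset.mem_univ i⟩⟩)
        simp
      · intro h
        exact absurd (Finset.mem_erase.mpr ⟨fun h' => ha h'.symm, Finset.mem_univ i⟩) h
    rw [← Finset.add_sum_erase _ _ (Finset.mem_univ i)]
    have h1 : (∑ b ∈ univ.erase i, ∏ l ∈ (univ.erase i).erase b, (X - C (z l))).eval (z i)
        = ∑ b ∈ univ.erase i, E b := by
      rw [Polynomial.eval_finset_sum]
      apply Finset.sum_congr rfl
      intro b _
      rw [Polynomial.eval_prod]
      simp [hE]
    rw [h1, Finset.sum_congr rfl (fun a ha => hinner a (Finset.ne_of_mem_erase ha))]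
    ring
  have hqi : q.eval (z i) = 0 := by
    rw [Polynomial.eval_prod]
    apply Finset.prod_eq_zero (Finset.mem_univ i)
    simp
  have hkey := hode (z i)
  rw [hqi, hq'i, hq''i] at hkey
  have hSD : (∑ j ∈ univ.erase i, 1/(z i - z j)) * D = ∑ b ∈ univ.erase i, E b := by
    rw [Finset.sum_mul]
    apply Finset.sum_congr rfl
    intro b hb
    have : D = (z i - z b) * E b := (Finset.mul_prod_erase _ _ hb).symm
    rw [this]
    field_simp [hzz b hb]
  have h2zi : z i ≠ 0 := hz0 i
  apply mul_right_cancel₀ hDne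
  rw [hSD]
  have heq : ∑ b : Fin N, E b = E i + ∑ b ∈ univ.erase i, E b :=
    (Finset.add_sum_erase _ E (Finset.mem_univ i)).symm
  field_simp
  linear_combination hkey

/-! ### The key summation identity -/

lemma sumc (m : ℕ) : (∑ k ∈ range m, (2*(k:ℝ)+2)) = (m:ℝ)^2 + m := by
  induction m with
  | zero => simp
  | succ m ih => rw [Finset.sum_range_succ, ih]; push_cast; ring

theorem key {z : Fin N → ℝ} (hinj : Function.Injective z) (hz0 : ∀ i, z i ≠ 0)
    (hS : ∀ i, ∑ j ∈ univ.erase i, 1/(z i - z j) = (z i - ν)/(2 * z i))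
    (i : Fin N) (m : ℕ) :
    z i^m + ν*z i^m/z i
      + 2*∑ j ∈ univ.erase i, ((z i+z j)*z i^m - 2*z j^(m+1))/(z i - z j)^2
    = (2*(m:ℝ)+2)*z i^m + (2*(m:ℝ)^2+2*m-2*m*ν)*(z i^m/z i)
      - 2*∑ k ∈ range m, (2*(k:ℝ)+2)*(∑ j, z j^(m-1-k))*z i^k := by
  have hzi := hz0 i
  have per : ∀ j ∈ univ.erase i, ((z i+z j)*z i^m - 2*z j^(m+1))/(z i - z j)^2
      = (2*(m:ℝ)+1)*z i^m/(z i - z j)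
        - ∑ k ∈ range m, (2*(k:ℝ)+2)*z i^k*z j^(m-1-k) := by
    intro j hj
    have hne : z i - z j ≠ 0 :=
      sub_ne_zero_of_ne fun h => (Finset.ne_of_mem_erase hj) (hinj h.symm)
    exact ident_div m hne
  rw [Finset.sum_congr rfl per, Finset.sum_sub_distrib]
  have e1 : ∑ j ∈ univ.erase i, (2*(m:ℝ)+1)*z i^m/(z i - z j)
      = (2*(m:ℝ)+1)*z i^m * ((z i - ν)/(2*z i)) := by
    rw [← hS i, Finset.mul_sum]
    exact Finset.sum_congr rfl (fun j _ => by rw [mul_one_div])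
  have e2 : ∑ j ∈ univ.erase i, ∑ k ∈ range m, (2*(k:ℝ)+2)*z i^k*z j^(m-1-k)
      = ∑ k ∈ range m, (2*(k:ℝ)+2)*z i^k*((∑ j, z j^(m-1-k)) - z i^(m-1-k)) := by
    rw [Finset.sum_comm]
    apply Finset.sum_congr rfl
    intro k _
    rw [← Finset.mul_sum, Finset.sum_erase_eq_sub (Finset.mem_univ i)]
  have hpow : ∀ k ∈ range m, z i^k * z i^(m-1-k) = z i^m/z i := by
    intro k hk
    have hk' : k < m := Finset.mem_range.mp hk
    have h1 : k + (m-1-k) = m-1 := by omega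
    have h2 : m = (m-1)+1 := by omega
    rw [← pow_add, h1]
    have h3 : z i ^ m = z i ^ (m-1) * z i := by
      conv_lhs => rw [h2]
      rw [pow_succ]
    rw [h3, mul_div_assoc, div_self hzi, mul_one]
  have e3 : ∑ k ∈ range m, (2*(k:ℝ)+2)*z i^k*((∑ j, z j^(m-1-k)) - z i^(m-1-k))
      = ∑ k ∈ range m, (2*(k:ℝ)+2)*(∑ j, z j^(m-1-k))*z i^k
        - ((m:ℝ)^2+m)*(z i^m/z i) := by
    have : ∀ k ∈ range m, (2*(k:ℝ)+2)*z i^k*((∑ j, z j^(m-1-k)) - z i^(m-1-k))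
        = (2*(k:ℝ)+2)*(∑ j, z j^(m-1-k))*z i^k - (2*(k:ℝ)+2)*(z i^m/z i) := by
      intro k hk
      linear_combination (-(2*(k:ℝ)+2)) * hpow k hk
    rw [Finset.sum_congr rfl this, Finset.sum_sub_distrib, ← Finset.sum_mul, sumc]
  rw [e1, e2, e3]
  field_simp
  ring

end Statement12Aux

open Statement12Aux

/-- For `y_i = √(2 z_i)` with `z` the ordered zeros of the Laguerre polynomial
`L_N^{(ν-1)}`, the matrix `A_ν` with
`A_{ν,ij} = 1/(y_i - y_j)² - 1/(y_i + y_j)²` for `i ≠ j` and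
`A_{ν,ii} = ∑_{j≠i}(-1/(y_i - y_j)² - 1/(y_i + y_j)²) - ν/y_i²`
is such that `E - 2A_ν` has eigenvalues `2, 4, …, 2N` counted with multiplicity
(expressed via the characteristic polynomial), independently of `ν`. -/
theorem statement12 (N : ℕ) (hN : 1 ≤ N) (ν : ℝ) (hν : 0 < ν)
    (z : Fin N → ℝ) (hz : StrictAnti z) (hzpos : ∀ i, 0 < z i)
    (hzero : ∀ i, laguerre N (ν - 1) (z i) = 0)
    (hall : ∀ w : ℝ, laguerre N (ν - 1) w = 0 → ∃ i, w = z i)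
    (y : Fin N → ℝ) (hy : ∀ i, y i = Real.sqrt (2 * z i))
    (A : Matrix (Fin N) (Fin N) ℝ)
    (hA : ∀ i j : Fin N, A i j =
      if i = j then
        (∑ l ∈ Finset.univ.erase i, (-1/(y i - y l)^2 - 1/(y i + y l)^2)) - ν/(y i)^2
      else 1/(y i - y j)^2 - 1/(y i + y j)^2) :
    (1 - 2 • A).charpoly = ∏ k ∈ Finset.range N, (X - C (2 * ((k : ℝ) + 1))) := by
  classical
  open Finset in
  have hinj : Function.Injective z := hz.injective
  have hz0 : ∀ i, z i ≠ 0 := fun i => (hzpos i).ne'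
  have ysq : ∀ i, y i ^ 2 = 2 * z i := fun i => by
    rw [hy i]; exact Real.sq_sqrt (by linarith [hzpos i])
  have ypos : ∀ i, 0 < y i := fun i => by
    rw [hy i]; exact Real.sqrt_pos.mpr (by linarith [hzpos i])
  have hzsub : ∀ {i j : Fin N}, i ≠ j → z i - z j ≠ 0 := fun {i j} h =>
    sub_ne_zero_of_ne (fun hh => h (hinj hh))
  have hysub : ∀ {i j : Fin N}, i ≠ j → y i - y j ≠ 0 := by
    intro i j h
    refine sub_ne_zero_of_ne (fun hh => hzsub h ?_)
    have h1 := ysq i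
    rw [hh, ysq j] at h1
    linarith
  have hyadd : ∀ i j : Fin N, y i + y j ≠ 0 := fun i j =>
    ne_of_gt (by linarith [ypos i, ypos j])
  -- Stieltjes identity
  have hSt : ∀ i, ∑ j ∈ Finset.univ.erase i, 1/(z i - z j) = (z i - ν)/(2 * z i) := by
    obtain ⟨c, hc, hfac⟩ := LP_factor (ν := ν) z hinj
      (fun i => by rw [LP_eval]; exact hzero i)
    apply stieltjes hinj hz0
    intro x
    have hode := LP_ODE N ν
    have hd1 : derivative ((∏ i, (X - C (z i))) * C c)
        = derivative (∏ i, (X - C (z i)) : ℝ[X]) * C c := by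
      rw [derivative_mul, derivative_C, mul_zero, add_zero]
    rw [hfac, hd1] at hode
    have hd2 : derivative (derivative (∏ i, (X - C (z i)) : ℝ[X]) * C c)
        = derivative (derivative (∏ i, (X - C (z i)) : ℝ[X])) * C c := by
      rw [derivative_mul, derivative_C, mul_zero, add_zero]
    rw [hd2] at hode
    have hev := congrArg (Polynomial.eval x) hode
    simp only [Polynomial.eval_add, Polynomial.eval_mul, Polynomial.eval_sub,
      Polynomial.eval_X, Polynomial.eval_C, Polynomial.eval_zero] at hev
    apply mul_right_cancel₀ hc
    linear_combination hev
  -- matrices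
  set V : Matrix (Fin N) (Fin N) ℝ := Matrix.of (fun i m : Fin N => y i * z i ^ (m : ℕ))
    with hVdef
  set T : Matrix (Fin N) (Fin N) ℝ := Matrix.of (fun l m : Fin N =>
      (if (l:ℕ) = (m:ℕ) then 2*((m:ℕ):ℝ)+2 else 0)
      + (if (l:ℕ)+1 = (m:ℕ) then 2*((m:ℕ):ℝ)^2+2*((m:ℕ):ℝ)-2*((m:ℕ):ℝ)*ν else 0)
      - (if (l:ℕ) < (m:ℕ) then 2*(2*((l:ℕ):ℝ)+2)*(∑ j, z j ^ ((m:ℕ)-1-(l:ℕ))) else 0))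
    with hTdef
  have hVapp : ∀ i m : Fin N, V i m = y i * z i ^ (m:ℕ) := fun i m => rfl
  have hBV : (1 - 2 • A) * V = V * T := by
    ext i m
    rw [Matrix.mul_apply, Matrix.mul_apply]
    have hBapp : ∀ j, ((1 - 2 • A : Matrix (Fin N) (Fin N) ℝ) i j) = (if i = j then (1:ℝ) else 0) - 2 * A i j := by
      intro j
      have h2 : (2 • A : Matrix (Fin N) (Fin N) ℝ) i j = 2 * A i j := by
        rw [Matrix.smul_apply]
        simp [nsmul_eq_mul]
      rw [Matrix.sub_apply, h2, Matrix.one_apply]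
    have hconv2 : ∀ l ∈ Finset.univ.erase i,
        -1/(y i - y l)^2 - 1/(y i + y l)^2 = -((z i + z l)/(z i - z l)^2) := by
      intro l hl
      have hil : i ≠ l := fun h => (Finset.ne_of_mem_erase hl) h.symm
      have hd := hysub hil
      have hs := hyadd i l
      have hzi' : z i = y i^2/2 := by have := ysq i; linarith
      have hzl' : z l = y l^2/2 := by have := ysq l; linarith
      have h12 : y i^2/2 - y l^2/2 ≠ 0 := by
        have he : (y i - y l)*(y i + y l)/2 = y i^2/2 - y l^2/2 := by ring
        rw [← he]
        exact div_ne_zero (mul_ne_zero hd hs) two_ne_zero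
      rw [hzi', hzl']
      have hee : y i^2/2 - y l^2/2 = (y i - y l)*(y i + y l)/2 := by ring
      rw [hee]
      field_simp
      ring
    have hAii : A i i = -(∑ l ∈ Finset.univ.erase i, (z i + z l)/(z i - z l)^2)
        - ν/(2*z i) := by
      rw [hA i i, if_pos rfl, Finset.sum_congr rfl hconv2, ysq i, Finset.sum_neg_distrib]
    have hAoff : ∀ j ∈ Finset.univ.erase i,
        A i j * V j m = y i * (2 * (z j^((m:ℕ)+1)/(z i - z j)^2)) := by
      intro j hj
      have hij : i ≠ j := fun h => (Finset.ne_of_mem_erase hj) h.symm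
      have hd := hysub hij
      have hs := hyadd i j
      have hzi' : z i = y i^2/2 := by have := ysq i; linarith
      have hzj' : z j = y j^2/2 := by have := ysq j; linarith
      have hconv1 : A i j = y i * y j/(z i - z j)^2 := by
        rw [hA i j, if_neg hij]
        have h12 : y i^2/2 - y j^2/2 ≠ 0 := by
          have he : (y i - y j)*(y i + y j)/2 = y i^2/2 - y j^2/2 := by ring
          rw [← he]
          exact div_ne_zero (mul_ne_zero hd hs) two_ne_zero
        rw [hzi', hzj']
        have hee : y i^2/2 - y j^2/2 = (y i - y j)*(y i + y j)/2 := by ring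
        rw [hee]
        field_simp
        ring
      calc A i j * V j m = y i * ((y j^2) * z j^(m:ℕ))/(z i - z j)^2 := by
            rw [hconv1, hVapp]; ring
        _ = y i * (2 * (z j^((m:ℕ)+1)/(z i - z j)^2)) := by
            rw [ysq j, pow_succ]; ring
    have hLHSsplit : ∑ j, ((1 - 2 • A : Matrix (Fin N) (Fin N) ℝ) i j) * V j m
        = V i m - 2 * (A i i * V i m + ∑ j ∈ Finset.univ.erase i, A i j * V j m) := by
      have hper : ∀ j : Fin N, ((1 - 2 • A : Matrix (Fin N) (Fin N) ℝ) i j) * V j m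
          = (if i = j then V j m else 0) - 2*(A i j * V j m) := by
        intro j; rw [hBapp j]; by_cases h : i = j <;> simp [h] <;> ring
      rw [Finset.sum_congr rfl (fun j _ => hper j), Finset.sum_sub_distrib,
          Finset.sum_ite_eq, if_pos (Finset.mem_univ i), ← Finset.mul_sum,
          ← Finset.add_sum_erase _ (fun j => A i j * V j m) (Finset.mem_univ i)]
    have hks : ∑ j ∈ Finset.univ.erase i,
          ((z i + z j)*z i^(m:ℕ) - 2*z j^((m:ℕ)+1))/(z i - z j)^2
        = z i^(m:ℕ) * (∑ l ∈ Finset.univ.erase i, (z i + z l)/(z i - z l)^2)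
          - 2 * ∑ j ∈ Finset.univ.erase i, z j^((m:ℕ)+1)/(z i - z j)^2 := by
      have hper : ∀ j ∈ Finset.univ.erase i,
          ((z i + z j)*z i^(m:ℕ) - 2*z j^((m:ℕ)+1))/(z i - z j)^2
            = z i^(m:ℕ) * ((z i + z j)/(z i - z j)^2)
              - 2 * (z j^((m:ℕ)+1)/(z i - z j)^2) := by
        intro j hj; rw [sub_div]; ring
      rw [Finset.sum_congr rfl hper, Finset.sum_sub_distrib, ← Finset.mul_sum,
          ← Finset.mul_sum]
    have hL : ∑ j, ((1 - 2 • A : Matrix (Fin N) (Fin N) ℝ) i j) * V j m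
        = y i * (z i^(m:ℕ) + ν*z i^(m:ℕ)/z i
          + 2*∑ j ∈ Finset.univ.erase i,
              ((z i+z j)*z i^(m:ℕ) - 2*z j^((m:ℕ)+1))/(z i - z j)^2) := by
      rw [hLHSsplit, hAii, hVapp i m, Finset.sum_congr rfl hAoff, ← Finset.mul_sum,
          ← Finset.mul_sum, hks]
      have hzi := hz0 i
      field_simp
      ring
    have hpw : (m:ℕ) ≠ 0 → z i^((m:ℕ)-1) = z i^(m:ℕ)/z i := by
      intro hm
      have h2 : (m:ℕ) = ((m:ℕ)-1)+1 := by omega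
      have h3 : z i ^ (m:ℕ) = z i ^ ((m:ℕ)-1) * z i := by
        conv_lhs => rw [h2]
        rw [pow_succ]
      rw [h3, mul_div_assoc, div_self (hz0 i), mul_one]
    have hR : ∑ l, V i l * T l m = y i * ((2*((m:ℕ):ℝ)+2)*z i^(m:ℕ)
        + (2*((m:ℕ):ℝ)^2+2*((m:ℕ):ℝ)-2*((m:ℕ):ℝ)*ν)*(z i^(m:ℕ)/z i)
        - 2*∑ k ∈ Finset.range (m:ℕ), (2*(k:ℝ)+2)*(∑ j, z j^((m:ℕ)-1-k))*z i^k) := by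
      have expand : ∀ l : Fin N, V i l * T l m =
          (if l = m then y i * ((2*((m:ℕ):ℝ)+2)*z i^(m:ℕ)) else 0)
          + (if (l:ℕ)+1 = (m:ℕ) then
              y i * ((2*((m:ℕ):ℝ)^2+2*((m:ℕ):ℝ)-2*((m:ℕ):ℝ)*ν)*z i^((m:ℕ)-1)) else 0)
          - (if (l:ℕ) < (m:ℕ) then
              y i * (2*(2*((l:ℕ):ℝ)+2)*(∑ j, z j^((m:ℕ)-1-(l:ℕ)))*z i^(l:ℕ)) else 0) := by
        intro l
        have hunf : V i l * T l m = (y i * z i^(l:ℕ))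
            * ((if (l:ℕ) = (m:ℕ) then 2*((m:ℕ):ℝ)+2 else 0)
            + (if (l:ℕ)+1 = (m:ℕ) then 2*((m:ℕ):ℝ)^2+2*((m:ℕ):ℝ)-2*((m:ℕ):ℝ)*ν else 0)
            - (if (l:ℕ) < (m:ℕ) then 2*(2*((l:ℕ):ℝ)+2)*(∑ j, z j ^ ((m:ℕ)-1-(l:ℕ))) else 0)) :=
          rfl
        rw [hunf, mul_sub, mul_add]
        congr 1
        · congr 1
          · by_cases h : l = m
            · subst h; rw [if_pos rfl, if_pos rfl]; ring
            · rw [if_neg (fun hh => h (Fin.ext hh)), if_neg h, mul_zero]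
          · by_cases h : (l:ℕ)+1 = (m:ℕ)
            · rw [if_pos h, if_pos h]
              have hl : (l:ℕ) = (m:ℕ)-1 := by omega
              rw [hl]; ring
            · rw [if_neg h, if_neg h, mul_zero]
        · by_cases h : (l:ℕ) < (m:ℕ)
          · rw [if_pos h, if_pos h]; ring
          · rw [if_neg h, if_neg h, mul_zero]
      rw [Finset.sum_congr rfl (fun l _ => expand l), Finset.sum_sub_distrib,
          Finset.sum_add_distrib, Finset.sum_ite_eq' Finset.univ m, if_pos (Finset.mem_univ m)]
      have hsum2 : ∑ l : Fin N, (if (l:ℕ)+1 = (m:ℕ) then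
            y i * ((2*((m:ℕ):ℝ)^2+2*((m:ℕ):ℝ)-2*((m:ℕ):ℝ)*ν)*z i^((m:ℕ)-1)) else 0)
          = y i * ((2*((m:ℕ):ℝ)^2+2*((m:ℕ):ℝ)-2*((m:ℕ):ℝ)*ν)*(z i^(m:ℕ)/z i)) := by
        by_cases hm : (m:ℕ) = 0
        · rw [Finset.sum_eq_zero (fun l _ => by rw [if_neg (by omega)]), hm]
          norm_num
        · have hl0lt : (m:ℕ)-1 < N := by have := m.isLt; omega
          rw [Finset.sum_eq_single (⟨(m:ℕ)-1, hl0lt⟩ : Fin N)]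
          · rw [if_pos (by simp; omega), hpw hm]
          · intro b _ hb
            rw [if_neg (fun hc => hb (Fin.ext (by simp; omega)))]
          · intro h; exact absurd (Finset.mem_univ _) h
      rw [hsum2]
      have hsum3 : ∑ l : Fin N, (if (l:ℕ) < (m:ℕ) then
            y i * (2*(2*((l:ℕ):ℝ)+2)*(∑ j, z j^((m:ℕ)-1-(l:ℕ)))*z i^(l:ℕ)) else 0)
          = y i * (2*∑ k ∈ Finset.range (m:ℕ), (2*(k:ℝ)+2)*(∑ j, z j^((m:ℕ)-1-k))*z i^k) := by
        rw [Fin.sum_univ_eq_sum_range (fun l => if l < (m:ℕ) then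
            y i * (2*(2*(l:ℝ)+2)*(∑ j, z j^((m:ℕ)-1-l))*z i^l) else 0) N]
        have hfil : Finset.filter (fun n => n < (m:ℕ)) (Finset.range N)
            = Finset.range (m:ℕ) := by
          ext n
          simp only [Finset.mem_filter, Finset.mem_range]
          have := m.isLt
          omega
        rw [← Finset.sum_filter, hfil, Finset.mul_sum, Finset.mul_sum]
        apply Finset.sum_congr rfl
        intro k _
        ring
      rw [hsum3]
      ring
    rw [hL, hR, key hinj hz0 hSt i (m:ℕ)]
  -- invertibility of V
  have hdet : V.det ≠ 0 := by
    have hVfact : V = Matrix.diagonal y * Matrix.vandermonde z := by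
      ext a b
      rw [hVapp, Matrix.diagonal_mul, Matrix.vandermonde_apply]
    rw [hVfact, Matrix.det_mul, Matrix.det_diagonal, Matrix.det_vandermonde]
    apply mul_ne_zero
    · exact Finset.prod_ne_zero_iff.mpr (fun a _ => (ypos a).ne')
    · apply Finset.prod_ne_zero_iff.mpr
      intro a _
      apply Finset.prod_ne_zero_iff.mpr
      intro b hb
      have hab : a < b := Finset.mem_Ioi.mp hb
      exact sub_ne_zero_of_ne (hz hab).ne
  have hUdet : IsUnit V.det := isUnit_iff_ne_zero.mpr hdet
  have hB : (1 - 2 • A : Matrix (Fin N) (Fin N) ℝ) = V * T * V⁻¹ := by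
    rw [← hBV, Matrix.mul_nonsing_inv_cancel_right _ _ hUdet]
  have hVcdet : IsUnit (V.map (C : ℝ →+* ℝ[X])).det := by
    have hh : (V.map (C : ℝ →+* ℝ[X])).det = C V.det := by
      rw [← RingHom.mapMatrix_apply]
      exact (RingHom.map_det (C : ℝ →+* ℝ[X]) V).symm
    rw [hh]
    exact Polynomial.isUnit_C.mpr (isUnit_iff_ne_zero.mpr hdet)
  have hVcU : IsUnit (V.map (C : ℝ →+* ℝ[X])) :=
    (Matrix.isUnit_iff_isUnit_det _).mpr hVcdet
  have hmapone : (1 : Matrix (Fin N) (Fin N) ℝ).map (C : ℝ →+* ℝ[X]) = 1 :=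
    Matrix.map_one _ (map_zero C) (map_one C)
  have hVinvmap : (V⁻¹).map (C : ℝ →+* ℝ[X]) = (V.map (C : ℝ →+* ℝ[X]))⁻¹ := by
    symm
    apply Matrix.inv_eq_right_inv
    rw [← Matrix.map_mul, Matrix.mul_nonsing_inv _ hUdet, hmapone]
  have h1 : (C : ℝ →+* ℝ[X]).mapMatrix (V * T * V⁻¹)
      = (V.map (C : ℝ →+* ℝ[X])) * ((C : ℝ →+* ℝ[X]).mapMatrix T)
        * (V.map (C : ℝ →+* ℝ[X]))⁻¹ := by
    rw [map_mul, map_mul]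
    simp only [RingHom.mapMatrix_apply]
    rw [hVinvmap]
  have hsc : (V.map (C : ℝ →+* ℝ[X])) * Matrix.scalar (Fin N) (X:ℝ[X])
      * (V.map (C : ℝ →+* ℝ[X]))⁻¹ = Matrix.scalar (Fin N) (X:ℝ[X]) := by
    have hcomm : Matrix.scalar (Fin N) (X:ℝ[X]) * (V.map (C : ℝ →+* ℝ[X]))
        = (V.map (C : ℝ →+* ℝ[X])) * Matrix.scalar (Fin N) (X:ℝ[X]) :=
      Matrix.scalar_commute (X:ℝ[X]) (fun r => Commute.all X r) _
    rw [← hcomm, Matrix.mul_assoc, Matrix.mul_nonsing_inv _ hVcdet, Matrix.mul_one]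
  have hcm : Matrix.charmatrix (V * T * V⁻¹)
      = (V.map (C : ℝ →+* ℝ[X])) * Matrix.charmatrix T * (V.map (C : ℝ →+* ℝ[X]))⁻¹ := by
    show Matrix.scalar (Fin N) (X:ℝ[X]) - (C : ℝ →+* ℝ[X]).mapMatrix (V * T * V⁻¹)
        = (V.map (C : ℝ →+* ℝ[X]))
          * (Matrix.scalar (Fin N) (X:ℝ[X]) - (C : ℝ →+* ℝ[X]).mapMatrix T)
          * (V.map (C : ℝ →+* ℝ[X]))⁻¹
    rw [h1, Matrix.mul_sub, Matrix.sub_mul, hsc]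
  rw [hB]
  show (Matrix.charmatrix (V * T * V⁻¹)).det = _
  rw [hcm, Matrix.det_conj hVcU]
  have htri : (Matrix.charmatrix T).BlockTriangular id := by
    intro a b hab
    have hba : (b:ℕ) < (a:ℕ) := hab
    have hne : a ≠ b := fun h => by rw [h] at hba; omega
    rw [Matrix.charmatrix_apply_ne _ _ _ hne]
    have hT0 : T a b = 0 := by
      show (if (a:ℕ) = (b:ℕ) then 2*((b:ℕ):ℝ)+2 else 0)
          + (if (a:ℕ)+1 = (b:ℕ) then 2*((b:ℕ):ℝ)^2+2*((b:ℕ):ℝ)-2*((b:ℕ):ℝ)*ν else 0)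
          - (if (a:ℕ) < (b:ℕ) then 2*(2*((a:ℕ):ℝ)+2)*(∑ j, z j ^ ((b:ℕ)-1-(a:ℕ))) else 0) = 0
      rw [if_neg (by omega), if_neg (by omega), if_neg (by omega)]
      ring
    rw [hT0, map_zero, neg_zero]
  rw [Matrix.det_of_upperTriangular htri]
  have hdiag : ∀ l : Fin N, Matrix.charmatrix T l l = X - C (2*((l:ℕ):ℝ)+2) := by
    intro l
    rw [Matrix.charmatrix_apply_eq]
    have hTll : T l l = 2*((l:ℕ):ℝ)+2 := by
      show (if (l:ℕ) = (l:ℕ) then 2*((l:ℕ):ℝ)+2 else 0)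
          + (if (l:ℕ)+1 = (l:ℕ) then 2*((l:ℕ):ℝ)^2+2*((l:ℕ):ℝ)-2*((l:ℕ):ℝ)*ν else 0)
          - (if (l:ℕ) < (l:ℕ) then 2*(2*((l:ℕ):ℝ)+2)*(∑ j, z j ^ ((l:ℕ)-1-(l:ℕ))) else 0)
          = 2*((l:ℕ):ℝ)+2
      rw [if_pos rfl, if_neg (by omega), if_neg (by omega)]
      ring
    rw [hTll]
  rw [Finset.prod_congr rfl (fun l _ => hdiag l),
      Fin.prod_univ_eq_prod_range (fun k => X - C (2*(k:ℝ)+2)) N]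
  apply Finset.prod_congr rfl
  intro k _
  congr 2
  ring
end
end
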